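/- arXiv:1406.2561 — 4 statements merged into one kernel-verified Lean document; each statement's English description precedes it below -/
import Mathlib

section
/- Let A be a Hopf algebra, σ a normalized Hopf 2-cocycle on A, and τ a normalized Hopf 2-cocycle on the deformed Hopf algebra A_σ. Then the convolution product τ ∗ σ, defined by (τ∗σ)(a,b) = τ(a₁,b₁)σ(a₂,b₂), is a normalized Hopf 2-cocycle on A, and A_{τ∗σ} = (A_σ)_τ as Hopf algebras. -/
open TensorProduct

section ConvolutionFramework

variable (A : Type*) [Ring A] [Algebra ℂ A]

/-- The comultiplication of the tensor-product coalgebra `A ⊗ A`, built from a given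
comultiplication `Δ` on `A`. -/
noncomputable def comul₂ (Δ : A →ₗ[ℂ] A ⊗[ℂ] A) :
    (A ⊗[ℂ] A) →ₗ[ℂ] (A ⊗[ℂ] A) ⊗[ℂ] (A ⊗[ℂ] A) :=
  (TensorProduct.tensorTensorTensorComm ℂ A A A A).toLinearMap ∘ₗ TensorProduct.map Δ Δ

/-- The counit of the tensor-product coalgebra `A ⊗ A`. -/
noncomputable def counit₂ (ε : A →ₗ[ℂ] ℂ) : (A ⊗[ℂ] A) →ₗ[ℂ] ℂ :=
  (LinearMap.mul' ℂ ℂ) ∘ₗ TensorProduct.map ε ε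

/-- Convolution product of two ℂ-valued linear maps on the coalgebra `A ⊗ A`:
`(σ ∗ τ)(a,b) = σ(a₁,b₁) τ(a₂,b₂)`. -/
noncomputable def convC (Δ : A →ₗ[ℂ] A ⊗[ℂ] A) (σ τ : (A ⊗[ℂ] A) →ₗ[ℂ] ℂ) :
    (A ⊗[ℂ] A) →ₗ[ℂ] ℂ :=
  (LinearMap.mul' ℂ ℂ) ∘ₗ TensorProduct.map σ τ ∘ₗ comul₂ A Δ

/-- Convolution product of two `A`-valued linear maps on the coalgebra `A ⊗ A`. -/
noncomputable def convH (Δ : A →ₗ[ℂ] A ⊗[ℂ] A) (f g : (A ⊗[ℂ] A) →ₗ[ℂ] A) :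
    (A ⊗[ℂ] A) →ₗ[ℂ] A :=
  (LinearMap.mul' ℂ A) ∘ₗ TensorProduct.map f g ∘ₗ comul₂ A Δ

/-- View a ℂ-valued map as an `A`-valued map via the unit of `A`. -/
noncomputable def toA (σ : (A ⊗[ℂ] A) →ₗ[ℂ] ℂ) : (A ⊗[ℂ] A) →ₗ[ℂ] A :=
  (Algebra.linearMap ℂ A) ∘ₗ σ

/-- The cocycle-deformed multiplication `m_σ = σ ∗ m ∗ σ⁻¹`. -/
noncomputable def deformMul (Δ : A →ₗ[ℂ] A ⊗[ℂ] A) (m : (A ⊗[ℂ] A) →ₗ[ℂ] A)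
    (σ σinv : (A ⊗[ℂ] A) →ₗ[ℂ] ℂ) : (A ⊗[ℂ] A) →ₗ[ℂ] A :=
  convH A Δ (convH A Δ (toA A σ) m) (toA A σinv)

/-- The linear map `a ⊗ (b ⊗ c) ↦ σ(b₁,c₁) σ(a, b₂·c₂)` (left side of the cocycle
condition), for the multiplication `m`. -/
noncomputable def cocyLHS (Δ : A →ₗ[ℂ] A ⊗[ℂ] A) (m : (A ⊗[ℂ] A) →ₗ[ℂ] A)
    (σ : (A ⊗[ℂ] A) →ₗ[ℂ] ℂ) : (A ⊗[ℂ] (A ⊗[ℂ] A)) →ₗ[ℂ] ℂ :=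
  (LinearMap.mul' ℂ ℂ) ∘ₗ TensorProduct.map σ σ ∘ₗ
    (TensorProduct.leftComm ℂ A (A ⊗[ℂ] A) A).toLinearMap ∘ₗ
      LinearMap.lTensor A ((LinearMap.lTensor (A ⊗[ℂ] A) m) ∘ₗ comul₂ A Δ)

/-- The linear map `a ⊗ (b ⊗ c) ↦ σ(a₁,b₁) σ(a₂·b₂, c)` (right side of the cocycle
condition), for the multiplication `m`. -/
noncomputable def cocyRHS (Δ : A →ₗ[ℂ] A ⊗[ℂ] A) (m : (A ⊗[ℂ] A) →ₗ[ℂ] A)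
    (σ : (A ⊗[ℂ] A) →ₗ[ℂ] ℂ) : (A ⊗[ℂ] (A ⊗[ℂ] A)) →ₗ[ℂ] ℂ :=
  (LinearMap.mul' ℂ ℂ) ∘ₗ TensorProduct.map σ σ ∘ₗ
    (TensorProduct.assoc ℂ (A ⊗[ℂ] A) A A).toLinearMap ∘ₗ
      LinearMap.rTensor A ((LinearMap.lTensor (A ⊗[ℂ] A) m) ∘ₗ comul₂ A Δ) ∘ₗ
        (TensorProduct.assoc ℂ A A A).symm.toLinearMap

/-- `σ` satisfies the Hopf 2-cocycle condition
`σ(b₁,c₁) σ(a, b₂c₂) = σ(a₁,b₁) σ(a₂b₂, c)` with respect to the multiplication `m`. -/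
def IsHopf2Cocycle (Δ : A →ₗ[ℂ] A ⊗[ℂ] A) (m : (A ⊗[ℂ] A) →ₗ[ℂ] A)
    (σ : (A ⊗[ℂ] A) →ₗ[ℂ] ℂ) : Prop :=
  cocyLHS A Δ m σ = cocyRHS A Δ m σ

/-- `σ` is normalized: `σ(a,1) = ε(a) = σ(1,a)`. -/
def IsNormalizedCocycle (ε : A →ₗ[ℂ] ℂ) (σ : (A ⊗[ℂ] A) →ₗ[ℂ] ℂ) : Prop :=
  ∀ a : A, σ (a ⊗ₜ[ℂ] (1 : A)) = ε a ∧ σ ((1 : A) ⊗ₜ[ℂ] a) = ε a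

/-- `σinv` is a convolution inverse of `σ` on the coalgebra `A ⊗ A`. -/
def IsConvInverse (Δ : A →ₗ[ℂ] A ⊗[ℂ] A) (ε : A →ₗ[ℂ] ℂ)
    (σ σinv : (A ⊗[ℂ] A) →ₗ[ℂ] ℂ) : Prop :=
  convC A Δ σ σinv = counit₂ A ε ∧ convC A Δ σinv σ = counit₂ A ε

end ConvolutionFramework

section Fw
variable {C D E : Type*} [AddCommGroup C] [Module ℂ C] [AddCommGroup D] [Module ℂ D]
  [AddCommGroup E] [Module ℂ E]
variable {B : Type*} [Ring B] [Algebra ℂ B]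

structure CD (C : Type*) [AddCommGroup C] [Module ℂ C] where
  Δ : C →ₗ[ℂ] C ⊗[ℂ] C
  ε : C →ₗ[ℂ] ℂ
  coassoc : (TensorProduct.assoc ℂ C C C).toLinearMap ∘ₗ Δ.rTensor C ∘ₗ Δ = Δ.lTensor C ∘ₗ Δ
  rT_counit : ε.rTensor C ∘ₗ Δ = TensorProduct.mk ℂ ℂ C 1
  lT_counit : ε.lTensor C ∘ₗ Δ = (TensorProduct.mk ℂ C ℂ).flip 1

noncomputable def cvg (c : CD C) (f g : C →ₗ[ℂ] B) : C →ₗ[ℂ] B :=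
  LinearMap.mul' ℂ B ∘ₗ TensorProduct.map f g ∘ₗ c.Δ

noncomputable def ung (c : CD C) : C →ₗ[ℂ] B := Algebra.linearMap ℂ B ∘ₗ c.ε

lemma coassoc' (c : CD C) :
    c.Δ.rTensor C ∘ₗ c.Δ =
      (TensorProduct.assoc ℂ C C C).symm.toLinearMap ∘ₗ c.Δ.lTensor C ∘ₗ c.Δ := by
  refine LinearMap.ext fun x => ?_
  have h1 := LinearMap.congr_fun c.coassoc x
  simp only [LinearMap.comp_apply, LinearEquiv.coe_coe] at h1 ⊢
  rw [← h1]
  simp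

lemma cvg_assoc (c : CD C) (f g h : C →ₗ[ℂ] B) :
    cvg c (cvg c f g) h = cvg c f (cvg c g h) := by
  unfold cvg
  rw [show TensorProduct.map (LinearMap.mul' ℂ B ∘ₗ TensorProduct.map f g ∘ₗ c.Δ) h
      = TensorProduct.map (LinearMap.mul' ℂ B ∘ₗ TensorProduct.map f g) h ∘ₗ c.Δ.rTensor C from by
    rw [LinearMap.map_comp_rTensor, LinearMap.comp_assoc]]
  rw [show TensorProduct.map f (LinearMap.mul' ℂ B ∘ₗ TensorProduct.map g h ∘ₗ c.Δ)
      = TensorProduct.map f (LinearMap.mul' ℂ B ∘ₗ TensorProduct.map g h) ∘ₗ c.Δ.lTensor C from by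
    rw [LinearMap.map_comp_lTensor, LinearMap.comp_assoc]]
  have key : LinearMap.mul' ℂ B ∘ₗ
      (TensorProduct.map (LinearMap.mul' ℂ B ∘ₗ TensorProduct.map f g) h ∘ₗ
        (TensorProduct.assoc ℂ C C C).symm.toLinearMap)
      = LinearMap.mul' ℂ B ∘ₗ TensorProduct.map f (LinearMap.mul' ℂ B ∘ₗ TensorProduct.map g h) := by
    ext x y z
    simp [mul_assoc]
  calc LinearMap.mul' ℂ B ∘ₗ
        (TensorProduct.map (LinearMap.mul' ℂ B ∘ₗ TensorProduct.map f g) h ∘ₗ c.Δ.rTensor C) ∘ₗ c.Δ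
      = (LinearMap.mul' ℂ B ∘ₗ
          (TensorProduct.map (LinearMap.mul' ℂ B ∘ₗ TensorProduct.map f g) h ∘ₗ
            (TensorProduct.assoc ℂ C C C).symm.toLinearMap)) ∘ₗ (c.Δ.lTensor C ∘ₗ c.Δ) := by
        simp only [LinearMap.comp_assoc, coassoc' c]
    _ = (LinearMap.mul' ℂ B ∘ₗ
          TensorProduct.map f (LinearMap.mul' ℂ B ∘ₗ TensorProduct.map g h)) ∘ₗ
            (c.Δ.lTensor C ∘ₗ c.Δ) := by rw [key]
    _ = _ := by simp only [LinearMap.comp_assoc]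

lemma cvg_one_left (c : CD C) (f : C →ₗ[ℂ] B) : cvg c (ung c) f = f := by
  unfold cvg ung
  rw [show TensorProduct.map (Algebra.linearMap ℂ B ∘ₗ c.ε) f
      = TensorProduct.map (Algebra.linearMap ℂ B) f ∘ₗ c.ε.rTensor C from by
    rw [LinearMap.map_comp_rTensor]]
  simp only [LinearMap.comp_assoc]
  rw [c.rT_counit]
  ext x
  simp [Algebra.algebraMap_eq_smul_one]

lemma cvg_one_right (c : CD C) (f : C →ₗ[ℂ] B) : cvg c f (ung c) = f := by
  unfold cvg ung
  rw [show TensorProduct.map f (Algebra.linearMap ℂ B ∘ₗ c.ε)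
      = TensorProduct.map f (Algebra.linearMap ℂ B) ∘ₗ c.ε.lTensor C from by
    rw [LinearMap.map_comp_lTensor]]
  simp only [LinearMap.comp_assoc]
  rw [c.lT_counit]
  ext x
  simp [Algebra.algebraMap_eq_smul_one]

lemma ung_C (c : CD C) : (ung c : C →ₗ[ℂ] ℂ) = c.ε := by
  refine LinearMap.ext fun x => ?_
  simp [ung]

/-- convolution monoid -/
noncomputable def CD.mon (c : CD C) (B : Type*) [Ring B] [Algebra ℂ B] :
    Monoid (C →ₗ[ℂ] B) where
  mul := cvg c
  one := ung c
  mul_assoc := cvg_assoc c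
  one_mul := cvg_one_left c
  mul_one := cvg_one_right c

/-- morphism of coalgebra data -/
def IsMor (c : CD C) (d : CD D) (φ : C →ₗ[ℂ] D) : Prop :=
  d.Δ ∘ₗ φ = TensorProduct.map φ φ ∘ₗ c.Δ ∧ d.ε ∘ₗ φ = c.ε

lemma IsMor.comp {c : CD C} {d : CD D} {e : CD E} {φ : C →ₗ[ℂ] D} {ψ : D →ₗ[ℂ] E}
    (hφ : IsMor c d φ) (hψ : IsMor d e ψ) : IsMor c e (ψ ∘ₗ φ) := by
  constructor
  · rw [← LinearMap.comp_assoc, hψ.1, LinearMap.comp_assoc, hφ.1, ← LinearMap.comp_assoc,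
      ← TensorProduct.map_comp]
  · rw [← LinearMap.comp_assoc, hψ.2, hφ.2]

lemma cvg_pullback {c : CD C} {d : CD D} {φ : C →ₗ[ℂ] D} (hφ : IsMor c d φ)
    (f g : D →ₗ[ℂ] B) : (cvg d f g) ∘ₗ φ = cvg c (f ∘ₗ φ) (g ∘ₗ φ) := by
  unfold cvg
  rw [TensorProduct.map_comp]
  simp only [LinearMap.comp_assoc]
  rw [hφ.1]

lemma ung_pullback {c : CD C} {d : CD D} {φ : C →ₗ[ℂ] D} (hφ : IsMor c d φ) :
    (ung d : D →ₗ[ℂ] B) ∘ₗ φ = ung c := by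
  unfold ung; rw [LinearMap.comp_assoc, hφ.2]

lemma IsMor.id (c : CD C) : IsMor c c LinearMap.id := by
  constructor
  · simp [TensorProduct.map_id]
  · simp

/-- algebra push: toA of a ℂ-valued convolution -/
lemma cvg_push (c : CD C) (f g : C →ₗ[ℂ] ℂ) :
    Algebra.linearMap ℂ B ∘ₗ cvg c f g
      = cvg c (Algebra.linearMap ℂ B ∘ₗ f) (Algebra.linearMap ℂ B ∘ₗ g) := by
  unfold cvg
  rw [TensorProduct.map_comp]
  have key : Algebra.linearMap ℂ B ∘ₗ LinearMap.mul' ℂ ℂ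
      = LinearMap.mul' ℂ B ∘ₗ TensorProduct.map (Algebra.linearMap ℂ B) (Algebra.linearMap ℂ B) := by
    refine TensorProduct.ext' fun x y => ?_
    simp
  simp only [← LinearMap.comp_assoc]
  rw [key]

/-- tensor of coalgebra data: comultiplication -/
noncomputable def tΔ (c : CD C) (d : CD D) :
    C ⊗[ℂ] D →ₗ[ℂ] (C ⊗[ℂ] D) ⊗[ℂ] (C ⊗[ℂ] D) :=
  (TensorProduct.tensorTensorTensorComm ℂ C C D D).toLinearMap ∘ₗ TensorProduct.map c.Δ d.Δ

noncomputable def tε (c : CD C) (d : CD D) : C ⊗[ℂ] D →ₗ[ℂ] ℂ :=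
  LinearMap.mul' ℂ ℂ ∘ₗ TensorProduct.map c.ε d.ε

section structural

noncomputable def SL : ((C ⊗[ℂ] C) ⊗[ℂ] C) ⊗[ℂ] ((D ⊗[ℂ] D) ⊗[ℂ] D) →ₗ[ℂ]
    (C ⊗[ℂ] D) ⊗[ℂ] ((C ⊗[ℂ] D) ⊗[ℂ] (C ⊗[ℂ] D)) :=
  (TensorProduct.assoc ℂ (C ⊗[ℂ] D) (C ⊗[ℂ] D) (C ⊗[ℂ] D)).toLinearMap ∘ₗ
    LinearMap.rTensor (C ⊗[ℂ] D) (TensorProduct.tensorTensorTensorComm ℂ C C D D).toLinearMap ∘ₗ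
      (TensorProduct.tensorTensorTensorComm ℂ (C ⊗[ℂ] C) C (D ⊗[ℂ] D) D).toLinearMap

noncomputable def SR : (C ⊗[ℂ] (C ⊗[ℂ] C)) ⊗[ℂ] (D ⊗[ℂ] (D ⊗[ℂ] D)) →ₗ[ℂ]
    (C ⊗[ℂ] D) ⊗[ℂ] ((C ⊗[ℂ] D) ⊗[ℂ] (C ⊗[ℂ] D)) :=
  LinearMap.lTensor (C ⊗[ℂ] D) (TensorProduct.tensorTensorTensorComm ℂ C C D D).toLinearMap ∘ₗ
    (TensorProduct.tensorTensorTensorComm ℂ C (C ⊗[ℂ] C) D (D ⊗[ℂ] D)).toLinearMap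

lemma CO1 (f : C →ₗ[ℂ] C ⊗[ℂ] C) (g : D →ₗ[ℂ] D ⊗[ℂ] D) :
    (TensorProduct.assoc ℂ (C ⊗[ℂ] D) (C ⊗[ℂ] D) (C ⊗[ℂ] D)).toLinearMap ∘ₗ
      LinearMap.rTensor (C ⊗[ℂ] D)
        ((TensorProduct.tensorTensorTensorComm ℂ C C D D).toLinearMap ∘ₗ TensorProduct.map f g) ∘ₗ
      (TensorProduct.tensorTensorTensorComm ℂ C C D D).toLinearMap
    = SL ∘ₗ TensorProduct.map (f.rTensor C) (g.rTensor D) := by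
  ext c1 c2 d1 d2
  simp [SL]

lemma CO2 (f : C →ₗ[ℂ] C ⊗[ℂ] C) (g : D →ₗ[ℂ] D ⊗[ℂ] D) :
    LinearMap.lTensor (C ⊗[ℂ] D)
        ((TensorProduct.tensorTensorTensorComm ℂ C C D D).toLinearMap ∘ₗ TensorProduct.map f g) ∘ₗ
      (TensorProduct.tensorTensorTensorComm ℂ C C D D).toLinearMap
    = SR ∘ₗ TensorProduct.map (f.lTensor C) (g.lTensor D) := by
  ext c1 c2 d1 d2
  simp [SR]

lemma SL_symm_eq_SR :
    (SL ∘ₗ TensorProduct.map (TensorProduct.assoc ℂ C C C).symm.toLinearMap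
      (TensorProduct.assoc ℂ D D D).symm.toLinearMap)
    = SR := by
  ext c1 c2 c3 d1 d2 d3
  simp [SL, SR]

end structural

lemma tΔ_coassoc (c : CD C) (d : CD D) :
    (TensorProduct.assoc ℂ (C ⊗[ℂ] D) (C ⊗[ℂ] D) (C ⊗[ℂ] D)).toLinearMap ∘ₗ
      (tΔ c d).rTensor (C ⊗[ℂ] D) ∘ₗ tΔ c d = (tΔ c d).lTensor (C ⊗[ℂ] D) ∘ₗ tΔ c d := by
  have h1 := CO1 c.Δ d.Δ
  have h2 := CO2 c.Δ d.Δ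
  simp only [← LinearMap.comp_assoc] at h1 h2
  unfold tΔ
  simp only [← LinearMap.comp_assoc]
  rw [h1, h2]
  simp only [LinearMap.comp_assoc]
  rw [← TensorProduct.map_comp, ← TensorProduct.map_comp, coassoc' c, coassoc' d,
    TensorProduct.map_comp]
  simp only [← LinearMap.comp_assoc]
  rw [SL_symm_eq_SR]

lemma tΔ_rT_counit (c : CD C) (d : CD D) :
    (tε c d).rTensor (C ⊗[ℂ] D) ∘ₗ tΔ c d = TensorProduct.mk ℂ ℂ (C ⊗[ℂ] D) 1 := by
  have key : (tε c d).rTensor (C ⊗[ℂ] D) ∘ₗ (tensorTensorTensorComm ℂ C C D D).toLinearMap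
      = ((LinearMap.mul' ℂ ℂ).rTensor (C ⊗[ℂ] D) ∘ₗ
          (tensorTensorTensorComm ℂ ℂ C ℂ D).toLinearMap) ∘ₗ
        TensorProduct.map (c.ε.rTensor C) (d.ε.rTensor D) := by
    ext c1 c2 d1 d2
    simp [tε]
  have fin : ((LinearMap.mul' ℂ ℂ).rTensor (C ⊗[ℂ] D) ∘ₗ
          (tensorTensorTensorComm ℂ ℂ C ℂ D).toLinearMap) ∘ₗ
        TensorProduct.map (TensorProduct.mk ℂ ℂ C 1) (TensorProduct.mk ℂ ℂ D 1)
      = TensorProduct.mk ℂ ℂ (C ⊗[ℂ] D) 1 := by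
    ext c1 d1
    simp
  unfold tΔ
  simp only [← LinearMap.comp_assoc] at key ⊢
  rw [key]
  simp only [LinearMap.comp_assoc]
  rw [← TensorProduct.map_comp, c.rT_counit, d.rT_counit]
  simp only [← LinearMap.comp_assoc] at fin ⊢
  rw [fin]

lemma tΔ_lT_counit (c : CD C) (d : CD D) :
    (tε c d).lTensor (C ⊗[ℂ] D) ∘ₗ tΔ c d = (TensorProduct.mk ℂ (C ⊗[ℂ] D) ℂ).flip 1 := by
  have key : (tε c d).lTensor (C ⊗[ℂ] D) ∘ₗ (tensorTensorTensorComm ℂ C C D D).toLinearMap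
      = ((LinearMap.mul' ℂ ℂ).lTensor (C ⊗[ℂ] D) ∘ₗ
          (tensorTensorTensorComm ℂ C ℂ D ℂ).toLinearMap) ∘ₗ
        TensorProduct.map (c.ε.lTensor C) (d.ε.lTensor D) := by
    ext c1 c2 d1 d2
    simp [tε]
  have fin : ((LinearMap.mul' ℂ ℂ).lTensor (C ⊗[ℂ] D) ∘ₗ
          (tensorTensorTensorComm ℂ C ℂ D ℂ).toLinearMap) ∘ₗ
        TensorProduct.map ((TensorProduct.mk ℂ C ℂ).flip 1) ((TensorProduct.mk ℂ D ℂ).flip 1)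
      = (TensorProduct.mk ℂ (C ⊗[ℂ] D) ℂ).flip 1 := by
    ext c1 d1
    simp
  unfold tΔ
  simp only [← LinearMap.comp_assoc] at key ⊢
  rw [key]
  simp only [LinearMap.comp_assoc]
  rw [← TensorProduct.map_comp, c.lT_counit, d.lT_counit]
  simp only [← LinearMap.comp_assoc] at fin ⊢
  rw [fin]

/-- tensor product of coalgebra data -/
noncomputable def CD.tens (c : CD C) (d : CD D) : CD (C ⊗[ℂ] D) where
  Δ := tΔ c d
  ε := tε c d
  coassoc := tΔ_coassoc c d
  rT_counit := tΔ_rT_counit c d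
  lT_counit := tΔ_lT_counit c d

@[simp] lemma tens_Δ (c : CD C) (d : CD D) : (c.tens d).Δ = tΔ c d := rfl
@[simp] lemma tens_ε (c : CD C) (d : CD D) : (c.tens d).ε = tε c d := rfl

/-- left collapse map -/
noncomputable def prL (c : CD C) : C ⊗[ℂ] D →ₗ[ℂ] D :=
  (TensorProduct.lid ℂ D).toLinearMap ∘ₗ c.ε.rTensor D

/-- right collapse map -/
noncomputable def prR (d : CD D) : C ⊗[ℂ] D →ₗ[ℂ] C :=
  (TensorProduct.rid ℂ C).toLinearMap ∘ₗ d.ε.lTensor C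

lemma isMor_prL (c : CD C) (d : CD D) : IsMor (c.tens d) d (prL c) := by
  constructor
  · show d.Δ ∘ₗ prL c = TensorProduct.map (prL c) (prL c) ∘ₗ tΔ c d
    have A1 : d.Δ ∘ₗ (TensorProduct.lid ℂ D).toLinearMap
        = (TensorProduct.lid ℂ (D ⊗[ℂ] D)).toLinearMap ∘ₗ d.Δ.lTensor ℂ := by
      ext x
      simp
    have K : TensorProduct.map (prL c (D := D)) (prL c) ∘ₗ
          (tensorTensorTensorComm ℂ C C D D).toLinearMap
        = (TensorProduct.lid ℂ (D ⊗[ℂ] D)).toLinearMap ∘ₗ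
            (LinearMap.mul' ℂ ℂ).rTensor (D ⊗[ℂ] D) ∘ₗ
              (TensorProduct.map c.ε c.ε).rTensor (D ⊗[ℂ] D) := by
      ext c1 c2 d1 d2
      simp [prL, TensorProduct.smul_tmul', smul_smul, mul_comm]
    have coll : TensorProduct.map c.ε c.ε ∘ₗ c.Δ
        = c.ε.lTensor ℂ ∘ₗ TensorProduct.mk ℂ ℂ C 1 := by
      rw [← LinearMap.lTensor_comp_rTensor, LinearMap.comp_assoc, c.rT_counit]
    have A4 : (TensorProduct.lid ℂ (D ⊗[ℂ] D)).toLinearMap ∘ₗ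
          (LinearMap.mul' ℂ ℂ).rTensor (D ⊗[ℂ] D) ∘ₗ
            TensorProduct.map (c.ε.lTensor ℂ ∘ₗ TensorProduct.mk ℂ ℂ C 1) d.Δ
        = (TensorProduct.lid ℂ (D ⊗[ℂ] D)).toLinearMap ∘ₗ d.Δ.lTensor ℂ ∘ₗ c.ε.rTensor D := by
      ext x y
      simp
    have L : d.Δ ∘ₗ prL c
        = (TensorProduct.lid ℂ (D ⊗[ℂ] D)).toLinearMap ∘ₗ d.Δ.lTensor ℂ ∘ₗ c.ε.rTensor D := by
      unfold prL
      rw [← LinearMap.comp_assoc, A1, LinearMap.comp_assoc]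
    rw [L]
    unfold tΔ
    simp only [← LinearMap.comp_assoc] at K ⊢
    rw [K]
    simp only [LinearMap.comp_assoc]
    rw [LinearMap.rTensor_comp_map, coll, A4]
  · show d.ε ∘ₗ prL c = tε c d
    ext x y
    simp [prL, tε]


lemma isMor_prR (c : CD C) (d : CD D) : IsMor (c.tens d) c (prR d) := by
  constructor
  · show c.Δ ∘ₗ prR d = TensorProduct.map (prR d) (prR d) ∘ₗ tΔ c d
    have A1 : c.Δ ∘ₗ (TensorProduct.rid ℂ C).toLinearMap
        = (TensorProduct.rid ℂ (C ⊗[ℂ] C)).toLinearMap ∘ₗ c.Δ.rTensor ℂ := by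
      ext x
      simp
    have K : TensorProduct.map (prR d (C := C)) (prR d) ∘ₗ
          (tensorTensorTensorComm ℂ C C D D).toLinearMap
        = (TensorProduct.rid ℂ (C ⊗[ℂ] C)).toLinearMap ∘ₗ
            (LinearMap.mul' ℂ ℂ).lTensor (C ⊗[ℂ] C) ∘ₗ
              (TensorProduct.map d.ε d.ε).lTensor (C ⊗[ℂ] C) := by
      ext c1 c2 d1 d2
      simp [prR, TensorProduct.smul_tmul', smul_smul, mul_comm]
    have coll : TensorProduct.map d.ε d.ε ∘ₗ d.Δ
        = d.ε.rTensor ℂ ∘ₗ (TensorProduct.mk ℂ D ℂ).flip 1 := by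
      rw [← LinearMap.rTensor_comp_lTensor, LinearMap.comp_assoc, d.lT_counit]
    have A4 : (TensorProduct.rid ℂ (C ⊗[ℂ] C)).toLinearMap ∘ₗ
          (LinearMap.mul' ℂ ℂ).lTensor (C ⊗[ℂ] C) ∘ₗ
            TensorProduct.map c.Δ (d.ε.rTensor ℂ ∘ₗ (TensorProduct.mk ℂ D ℂ).flip 1)
        = (TensorProduct.rid ℂ (C ⊗[ℂ] C)).toLinearMap ∘ₗ c.Δ.rTensor ℂ ∘ₗ d.ε.lTensor C := by
      ext x y
      simp
    have L : c.Δ ∘ₗ prR d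
        = (TensorProduct.rid ℂ (C ⊗[ℂ] C)).toLinearMap ∘ₗ c.Δ.rTensor ℂ ∘ₗ d.ε.lTensor C := by
      unfold prR
      rw [← LinearMap.comp_assoc, A1, LinearMap.comp_assoc]
    rw [L]
    unfold tΔ
    simp only [← LinearMap.comp_assoc] at K ⊢
    rw [K]
    simp only [LinearMap.comp_assoc]
    rw [LinearMap.lTensor_comp_map, coll, A4]
  · show c.ε ∘ₗ prR d = tε c d
    ext x y
    simp [prR, tε, mul_comm]

/-- tensor product of morphisms -/
lemma IsMor.tens {C' D' : Type*} [AddCommGroup C'] [Module ℂ C'] [AddCommGroup D'] [Module ℂ D']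
    {c : CD C} {d : CD D} {c' : CD C'} {d' : CD D'} {φ : C →ₗ[ℂ] C'} {ψ : D →ₗ[ℂ] D'}
    (hφ : IsMor c c' φ) (hψ : IsMor d d' ψ) :
    IsMor (c.tens d) (c'.tens d') (TensorProduct.map φ ψ) := by
  have nat : (tensorTensorTensorComm ℂ C' C' D' D').toLinearMap ∘ₗ
        TensorProduct.map (TensorProduct.map φ φ) (TensorProduct.map ψ ψ)
      = TensorProduct.map (TensorProduct.map φ ψ) (TensorProduct.map φ ψ) ∘ₗ
        (tensorTensorTensorComm ℂ C C D D).toLinearMap := by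
    ext c1 c2 d1 d2
    simp
  constructor
  · show tΔ c' d' ∘ₗ TensorProduct.map φ ψ = _ ∘ₗ tΔ c d
    unfold tΔ
    rw [LinearMap.comp_assoc, ← TensorProduct.map_comp, hφ.1, hψ.1, TensorProduct.map_comp]
    simp only [← LinearMap.comp_assoc]
    rw [nat]
  · show tε c' d' ∘ₗ TensorProduct.map φ ψ = tε c d
    unfold tε
    rw [LinearMap.comp_assoc, ← TensorProduct.map_comp, hφ.2, hψ.2]

/-- inverse of an equivalence morphism -/
lemma IsMor.symm {c : CD C} {d : CD D} {e : C ≃ₗ[ℂ] D} (h : IsMor c d e.toLinearMap) :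
    IsMor d c e.symm.toLinearMap := by
  have h1 := h.1
  have h2 := h.2
  constructor
  · refine LinearMap.ext fun x => ?_
    have := LinearMap.congr_fun h1 (e.symm x)
    simp only [LinearMap.comp_apply, LinearEquiv.coe_coe, LinearEquiv.apply_symm_apply] at this ⊢
    rw [this]
    have : ∀ z : C ⊗[ℂ] C, TensorProduct.map e.symm.toLinearMap e.symm.toLinearMap
        (TensorProduct.map e.toLinearMap e.toLinearMap z) = z := by
      intro z
      induction z using TensorProduct.induction_on with
      | zero => simp
      | tmul => simp
      | add a b ha hb => simp [ha, hb]
    rw [this]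
  · refine LinearMap.ext fun x => ?_
    have := LinearMap.congr_fun h2 (e.symm x)
    simp only [LinearMap.comp_apply, LinearEquiv.coe_coe, LinearEquiv.apply_symm_apply] at this ⊢
    rw [← this]

/-- associator is a morphism -/
lemma isMor_assoc (c : CD C) (d : CD D) (e : CD E) :
    IsMor ((c.tens d).tens e) (c.tens (d.tens e))
      (TensorProduct.assoc ℂ C D E).toLinearMap := by
  constructor
  · show tΔ c (d.tens e) ∘ₗ _ = _ ∘ₗ tΔ (c.tens d) e
    unfold tΔ
    have lhs1 : TensorProduct.map c.Δ (tΔ d e) ∘ₗ (TensorProduct.assoc ℂ C D E).toLinearMap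
        = (TensorProduct.map LinearMap.id (tensorTensorTensorComm ℂ D D E E).toLinearMap) ∘ₗ
            TensorProduct.map c.Δ (TensorProduct.map d.Δ e.Δ) ∘ₗ
              (TensorProduct.assoc ℂ C D E).toLinearMap := by
      unfold tΔ
      rw [← LinearMap.comp_assoc, ← TensorProduct.map_comp, LinearMap.id_comp]
    have rhs1 : TensorProduct.map (tΔ c d) e.Δ
        = (TensorProduct.map (tensorTensorTensorComm ℂ C C D D).toLinearMap LinearMap.id) ∘ₗ
            TensorProduct.map (TensorProduct.map c.Δ d.Δ) e.Δ := by
      unfold tΔ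
      rw [← TensorProduct.map_comp, LinearMap.id_comp]
    have nat : TensorProduct.map c.Δ (TensorProduct.map d.Δ e.Δ) ∘ₗ
          (TensorProduct.assoc ℂ C D E).toLinearMap
        = (TensorProduct.assoc ℂ (C ⊗[ℂ] C) (D ⊗[ℂ] D) (E ⊗[ℂ] E)).toLinearMap ∘ₗ
            TensorProduct.map (TensorProduct.map c.Δ d.Δ) e.Δ := by
      ext x y z
      simp
    have struct : (tensorTensorTensorComm ℂ C C (D ⊗[ℂ] E) (D ⊗[ℂ] E)).toLinearMap ∘ₗ
          (TensorProduct.map LinearMap.id (tensorTensorTensorComm ℂ D D E E).toLinearMap) ∘ₗ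
            (TensorProduct.assoc ℂ (C ⊗[ℂ] C) (D ⊗[ℂ] D) (E ⊗[ℂ] E)).toLinearMap
        = TensorProduct.map (TensorProduct.assoc ℂ C D E).toLinearMap
            (TensorProduct.assoc ℂ C D E).toLinearMap ∘ₗ
          (tensorTensorTensorComm ℂ (C ⊗[ℂ] D) (C ⊗[ℂ] D) E E).toLinearMap ∘ₗ
            (TensorProduct.map (tensorTensorTensorComm ℂ C C D D).toLinearMap LinearMap.id) := by
      ext x y z w u v
      simp
    simp only [LinearMap.comp_assoc, tens_Δ]
    rw [lhs1, nat, rhs1]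
    simp only [← LinearMap.comp_assoc] at struct ⊢
    rw [← struct]
  · show tε c (d.tens e) ∘ₗ _ = tε (c.tens d) e
    ext x y z
    simp [tε, tens_ε, mul_assoc]

section Abs
variable {A' : Type*} [Ring A'] [Algebra ℂ A']

lemma SabsL (a : CD A') (d : CD D) (φ : D →ₗ[ℂ] ℂ) (h : D →ₗ[ℂ] A')
    (τ : A' ⊗[ℂ] A' →ₗ[ℂ] ℂ) :
    τ ∘ₗ (cvg d (Algebra.linearMap ℂ A' ∘ₗ φ) h).lTensor A'
      = cvg (a.tens d) (φ ∘ₗ prL a) (τ ∘ₗ h.lTensor A') := by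
  set G : (ℂ ⊗[ℂ] A') ⊗[ℂ] (D ⊗[ℂ] D) →ₗ[ℂ] ℂ :=
    LinearMap.mul' ℂ ℂ ∘ₗ
      TensorProduct.map (LinearMap.mul' ℂ ℂ ∘ₗ φ.lTensor ℂ) (τ ∘ₗ h.lTensor A') ∘ₗ
        (tensorTensorTensorComm ℂ ℂ A' D D).toLinearMap with hG
  have step2 : LinearMap.mul' ℂ ℂ ∘ₗ TensorProduct.map (φ ∘ₗ prL a) (τ ∘ₗ h.lTensor A') ∘ₗ
        (tensorTensorTensorComm ℂ A' A' D D).toLinearMap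
      = G ∘ₗ (a.ε.rTensor A').rTensor (D ⊗[ℂ] D) := by
    ext a1 a2 d1 d2
    simp [hG, prL]
  have step4 : G ∘ₗ (TensorProduct.mk ℂ ℂ A' 1).rTensor (D ⊗[ℂ] D)
      = τ ∘ₗ (LinearMap.mul' ℂ A').lTensor A' ∘ₗ
          (TensorProduct.map (Algebra.linearMap ℂ A' ∘ₗ φ) h).lTensor A' := by
    ext x y z
    simp [hG, Algebra.algebraMap_eq_smul_one, TensorProduct.smul_tmul']
    rw [← TensorProduct.smul_tmul', map_smul, smul_eq_mul]
  calc τ ∘ₗ (cvg d (Algebra.linearMap ℂ A' ∘ₗ φ) h).lTensor A'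
      = (G ∘ₗ (TensorProduct.mk ℂ ℂ A' 1).rTensor (D ⊗[ℂ] D)) ∘ₗ d.Δ.lTensor A' := by
        unfold cvg
        rw [step4]
        simp only [LinearMap.lTensor_comp, LinearMap.comp_assoc]
    _ = G ∘ₗ ((a.ε.rTensor A' ∘ₗ a.Δ).rTensor (D ⊗[ℂ] D)) ∘ₗ d.Δ.lTensor A' := by
        rw [a.rT_counit]
        simp only [LinearMap.comp_assoc]
    _ = (G ∘ₗ (a.ε.rTensor A').rTensor (D ⊗[ℂ] D)) ∘ₗ
          ((a.Δ).rTensor (D ⊗[ℂ] D) ∘ₗ (d.Δ).lTensor A') := by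
        rw [LinearMap.rTensor_comp]
        simp only [LinearMap.comp_assoc]
    _ = cvg (a.tens d) (φ ∘ₗ prL a) (τ ∘ₗ h.lTensor A') := by
        rw [← step2, LinearMap.rTensor_comp_lTensor]
        simp only [cvg, tens_Δ, tΔ, LinearMap.comp_assoc]

lemma SabsR (a : CD A') (d : CD D) (ψ : D →ₗ[ℂ] ℂ) (h : D →ₗ[ℂ] A')
    (τ : A' ⊗[ℂ] A' →ₗ[ℂ] ℂ) :
    τ ∘ₗ (cvg d h (Algebra.linearMap ℂ A' ∘ₗ ψ)).lTensor A'
      = cvg (a.tens d) (τ ∘ₗ h.lTensor A') (ψ ∘ₗ prL a) := by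
  set G : (A' ⊗[ℂ] ℂ) ⊗[ℂ] (D ⊗[ℂ] D) →ₗ[ℂ] ℂ :=
    LinearMap.mul' ℂ ℂ ∘ₗ
      TensorProduct.map (τ ∘ₗ h.lTensor A') (LinearMap.mul' ℂ ℂ ∘ₗ ψ.lTensor ℂ) ∘ₗ
        (tensorTensorTensorComm ℂ A' ℂ D D).toLinearMap with hG
  have step2 : LinearMap.mul' ℂ ℂ ∘ₗ TensorProduct.map (τ ∘ₗ h.lTensor A') (ψ ∘ₗ prL a) ∘ₗ
        (tensorTensorTensorComm ℂ A' A' D D).toLinearMap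
      = G ∘ₗ (a.ε.lTensor A').rTensor (D ⊗[ℂ] D) := by
    ext a1 a2 d1 d2
    simp [hG, prL, mul_comm]
  have step4 : G ∘ₗ ((TensorProduct.mk ℂ A' ℂ).flip 1).rTensor (D ⊗[ℂ] D)
      = τ ∘ₗ (LinearMap.mul' ℂ A').lTensor A' ∘ₗ
          (TensorProduct.map h (Algebra.linearMap ℂ A' ∘ₗ ψ)).lTensor A' := by
    ext x y z
    simp [hG, Algebra.algebraMap_eq_smul_one]
    ring
  calc τ ∘ₗ (cvg d h (Algebra.linearMap ℂ A' ∘ₗ ψ)).lTensor A'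
      = (G ∘ₗ ((TensorProduct.mk ℂ A' ℂ).flip 1).rTensor (D ⊗[ℂ] D)) ∘ₗ d.Δ.lTensor A' := by
        unfold cvg
        rw [step4]
        simp only [LinearMap.lTensor_comp, LinearMap.comp_assoc]
    _ = G ∘ₗ ((a.ε.lTensor A' ∘ₗ a.Δ).rTensor (D ⊗[ℂ] D)) ∘ₗ d.Δ.lTensor A' := by
        rw [a.lT_counit]
        simp only [LinearMap.comp_assoc]
    _ = (G ∘ₗ (a.ε.lTensor A').rTensor (D ⊗[ℂ] D)) ∘ₗ
          ((a.Δ).rTensor (D ⊗[ℂ] D) ∘ₗ (d.Δ).lTensor A') := by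
        rw [LinearMap.rTensor_comp]
        simp only [LinearMap.comp_assoc]
    _ = cvg (a.tens d) (τ ∘ₗ h.lTensor A') (ψ ∘ₗ prL a) := by
        rw [← step2, LinearMap.rTensor_comp_lTensor]
        simp only [cvg, tens_Δ, tΔ, LinearMap.comp_assoc]

lemma SabsL' (a : CD A') (d : CD D) (φ : D →ₗ[ℂ] ℂ) (h : D →ₗ[ℂ] A')
    (τ : A' ⊗[ℂ] A' →ₗ[ℂ] ℂ) :
    τ ∘ₗ (cvg d (Algebra.linearMap ℂ A' ∘ₗ φ) h).rTensor A'
      = cvg (d.tens a) (φ ∘ₗ prR a) (τ ∘ₗ h.rTensor A') := by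
  set G : (D ⊗[ℂ] D) ⊗[ℂ] (ℂ ⊗[ℂ] A') →ₗ[ℂ] ℂ :=
    LinearMap.mul' ℂ ℂ ∘ₗ
      TensorProduct.map (LinearMap.mul' ℂ ℂ ∘ₗ φ.rTensor ℂ) (τ ∘ₗ h.rTensor A') ∘ₗ
        (tensorTensorTensorComm ℂ D D ℂ A').toLinearMap with hG
  have step2 : LinearMap.mul' ℂ ℂ ∘ₗ TensorProduct.map (φ ∘ₗ prR a) (τ ∘ₗ h.rTensor A') ∘ₗ
        (tensorTensorTensorComm ℂ D D A' A').toLinearMap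
      = G ∘ₗ (a.ε.rTensor A').lTensor (D ⊗[ℂ] D) := by
    ext d1 d2 a1 a2
    simp [hG, prR, mul_comm]
  have step4 : G ∘ₗ (TensorProduct.mk ℂ ℂ A' 1).lTensor (D ⊗[ℂ] D)
      = τ ∘ₗ (LinearMap.mul' ℂ A').rTensor A' ∘ₗ
          (TensorProduct.map (Algebra.linearMap ℂ A' ∘ₗ φ) h).rTensor A' := by
    ext y z x
    simp [hG, Algebra.algebraMap_eq_smul_one, TensorProduct.smul_tmul']
    rw [← TensorProduct.smul_tmul', map_smul, smul_eq_mul]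
  calc τ ∘ₗ (cvg d (Algebra.linearMap ℂ A' ∘ₗ φ) h).rTensor A'
      = (G ∘ₗ (TensorProduct.mk ℂ ℂ A' 1).lTensor (D ⊗[ℂ] D)) ∘ₗ d.Δ.rTensor A' := by
        unfold cvg
        rw [step4]
        simp only [LinearMap.rTensor_comp, LinearMap.comp_assoc]
    _ = G ∘ₗ ((a.ε.rTensor A' ∘ₗ a.Δ).lTensor (D ⊗[ℂ] D)) ∘ₗ d.Δ.rTensor A' := by
        rw [a.rT_counit]
        simp only [LinearMap.comp_assoc]
    _ = (G ∘ₗ (a.ε.rTensor A').lTensor (D ⊗[ℂ] D)) ∘ₗ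
          ((a.Δ).lTensor (D ⊗[ℂ] D) ∘ₗ (d.Δ).rTensor A') := by
        rw [LinearMap.lTensor_comp]
        simp only [LinearMap.comp_assoc]
    _ = cvg (d.tens a) (φ ∘ₗ prR a) (τ ∘ₗ h.rTensor A') := by
        rw [← step2, LinearMap.lTensor_comp_rTensor]
        simp only [cvg, tens_Δ, tΔ, LinearMap.comp_assoc]

lemma SabsR' (a : CD A') (d : CD D) (ψ : D →ₗ[ℂ] ℂ) (h : D →ₗ[ℂ] A')
    (τ : A' ⊗[ℂ] A' →ₗ[ℂ] ℂ) :
    τ ∘ₗ (cvg d h (Algebra.linearMap ℂ A' ∘ₗ ψ)).rTensor A'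
      = cvg (d.tens a) (τ ∘ₗ h.rTensor A') (ψ ∘ₗ prR a) := by
  set G : (D ⊗[ℂ] D) ⊗[ℂ] (A' ⊗[ℂ] ℂ) →ₗ[ℂ] ℂ :=
    LinearMap.mul' ℂ ℂ ∘ₗ
      TensorProduct.map (τ ∘ₗ h.rTensor A') (LinearMap.mul' ℂ ℂ ∘ₗ ψ.rTensor ℂ) ∘ₗ
        (tensorTensorTensorComm ℂ D D A' ℂ).toLinearMap with hG
  have step2 : LinearMap.mul' ℂ ℂ ∘ₗ TensorProduct.map (τ ∘ₗ h.rTensor A') (ψ ∘ₗ prR a) ∘ₗ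
        (tensorTensorTensorComm ℂ D D A' A').toLinearMap
      = G ∘ₗ (a.ε.lTensor A').lTensor (D ⊗[ℂ] D) := by
    ext d1 d2 a1 a2
    simp [hG, prR, mul_comm]
  have step4 : G ∘ₗ ((TensorProduct.mk ℂ A' ℂ).flip 1).lTensor (D ⊗[ℂ] D)
      = τ ∘ₗ (LinearMap.mul' ℂ A').rTensor A' ∘ₗ
          (TensorProduct.map h (Algebra.linearMap ℂ A' ∘ₗ ψ)).rTensor A' := by
    ext y z x
    simp [hG, Algebra.algebraMap_eq_smul_one]
    rw [← TensorProduct.smul_tmul', map_smul, smul_eq_mul]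
    ring
  calc τ ∘ₗ (cvg d h (Algebra.linearMap ℂ A' ∘ₗ ψ)).rTensor A'
      = (G ∘ₗ ((TensorProduct.mk ℂ A' ℂ).flip 1).lTensor (D ⊗[ℂ] D)) ∘ₗ d.Δ.rTensor A' := by
        unfold cvg
        rw [step4]
        simp only [LinearMap.rTensor_comp, LinearMap.comp_assoc]
    _ = G ∘ₗ ((a.ε.lTensor A' ∘ₗ a.Δ).lTensor (D ⊗[ℂ] D)) ∘ₗ d.Δ.rTensor A' := by
        rw [a.lT_counit]
        simp only [LinearMap.comp_assoc]
    _ = (G ∘ₗ (a.ε.lTensor A').lTensor (D ⊗[ℂ] D)) ∘ₗ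
          ((a.Δ).lTensor (D ⊗[ℂ] D) ∘ₗ (d.Δ).rTensor A') := by
        rw [LinearMap.lTensor_comp]
        simp only [LinearMap.comp_assoc]
    _ = cvg (d.tens a) (τ ∘ₗ h.rTensor A') (ψ ∘ₗ prR a) := by
        rw [← step2, LinearMap.lTensor_comp_rTensor]
        simp only [cvg, tens_Δ, tΔ, LinearMap.comp_assoc]

end Abs

section Trans
variable {A0 : Type*} [AddCommGroup A0] [Module ℂ A0]

lemma TL (a : CD A0) (d : CD D) (φ : D →ₗ[ℂ] ℂ) (ψ : A0 ⊗[ℂ] D →ₗ[ℂ] ℂ) :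
    cvg (a.tens d) (φ ∘ₗ prL a) ψ
      = LinearMap.mul' ℂ ℂ ∘ₗ TensorProduct.map φ ψ ∘ₗ
          (TensorProduct.leftComm ℂ A0 D D).toLinearMap ∘ₗ d.Δ.lTensor A0 := by
  set Z : (ℂ ⊗[ℂ] A0) ⊗[ℂ] (D ⊗[ℂ] D) →ₗ[ℂ] D ⊗[ℂ] (A0 ⊗[ℂ] D) :=
    TensorProduct.map (TensorProduct.lid ℂ D).toLinearMap LinearMap.id ∘ₗ
      (tensorTensorTensorComm ℂ ℂ A0 D D).toLinearMap with hZ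
  have E1 : TensorProduct.map (prL a (D := D)) LinearMap.id ∘ₗ
        (tensorTensorTensorComm ℂ A0 A0 D D).toLinearMap
      = Z ∘ₗ (a.ε.rTensor A0).rTensor (D ⊗[ℂ] D) := by
    ext a1 a2 d1 d2
    simp [hZ, prL]
  have E2 : Z ∘ₗ (TensorProduct.mk ℂ ℂ A0 1).rTensor (D ⊗[ℂ] D)
      = (TensorProduct.leftComm ℂ A0 D D).toLinearMap := by
    ext x y z
    simp [hZ]
  calc cvg (a.tens d) (φ ∘ₗ prL a) ψ
      = LinearMap.mul' ℂ ℂ ∘ₗ TensorProduct.map φ ψ ∘ₗ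
          (TensorProduct.map (prL a) LinearMap.id ∘ₗ
            (tensorTensorTensorComm ℂ A0 A0 D D).toLinearMap) ∘ₗ
              ((a.Δ).rTensor (D ⊗[ℂ] D) ∘ₗ (d.Δ).lTensor A0) := by
        simp only [cvg, tens_Δ, tΔ, LinearMap.rTensor_comp_lTensor]
        rw [show TensorProduct.map (φ ∘ₗ prL a) ψ
            = TensorProduct.map φ ψ ∘ₗ TensorProduct.map (prL a) LinearMap.id from by
          rw [← TensorProduct.map_comp, LinearMap.comp_id]]
        simp only [LinearMap.comp_assoc]
    _ = LinearMap.mul' ℂ ℂ ∘ₗ TensorProduct.map φ ψ ∘ₗ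
          (Z ∘ₗ ((a.ε.rTensor A0 ∘ₗ a.Δ).rTensor (D ⊗[ℂ] D))) ∘ₗ (d.Δ).lTensor A0 := by
        rw [E1, LinearMap.rTensor_comp]
        simp only [LinearMap.comp_assoc]
    _ = _ := by
        rw [a.rT_counit, E2]

lemma TR (a : CD A0) (d : CD D) (φ : D →ₗ[ℂ] ℂ) (ψ : D ⊗[ℂ] A0 →ₗ[ℂ] ℂ) :
    cvg (d.tens a) (φ ∘ₗ prR a) ψ
      = LinearMap.mul' ℂ ℂ ∘ₗ TensorProduct.map φ ψ ∘ₗ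
          (TensorProduct.assoc ℂ D D A0).toLinearMap ∘ₗ d.Δ.rTensor A0 := by
  set Z : (D ⊗[ℂ] D) ⊗[ℂ] (ℂ ⊗[ℂ] A0) →ₗ[ℂ] D ⊗[ℂ] (D ⊗[ℂ] A0) :=
    TensorProduct.map (TensorProduct.rid ℂ D).toLinearMap LinearMap.id ∘ₗ
      (tensorTensorTensorComm ℂ D D ℂ A0).toLinearMap with hZ
  have E1 : TensorProduct.map (prR a (C := D)) LinearMap.id ∘ₗ
        (tensorTensorTensorComm ℂ D D A0 A0).toLinearMap
      = Z ∘ₗ (a.ε.rTensor A0).lTensor (D ⊗[ℂ] D) := by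
    ext d1 d2 a1 a2
    simp [hZ, prR, TensorProduct.smul_tmul']
  have E2 : Z ∘ₗ (TensorProduct.mk ℂ ℂ A0 1).lTensor (D ⊗[ℂ] D)
      = (TensorProduct.assoc ℂ D D A0).toLinearMap := by
    ext x y z
    simp [hZ]
  calc cvg (d.tens a) (φ ∘ₗ prR a) ψ
      = LinearMap.mul' ℂ ℂ ∘ₗ TensorProduct.map φ ψ ∘ₗ
          (TensorProduct.map (prR a) LinearMap.id ∘ₗ
            (tensorTensorTensorComm ℂ D D A0 A0).toLinearMap) ∘ₗ
              ((a.Δ).lTensor (D ⊗[ℂ] D) ∘ₗ (d.Δ).rTensor A0) := by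
        simp only [cvg, tens_Δ, tΔ, LinearMap.lTensor_comp_rTensor]
        rw [show TensorProduct.map (φ ∘ₗ prR a) ψ
            = TensorProduct.map φ ψ ∘ₗ TensorProduct.map (prR a) LinearMap.id from by
          rw [← TensorProduct.map_comp, LinearMap.comp_id]]
        simp only [LinearMap.comp_assoc]
    _ = LinearMap.mul' ℂ ℂ ∘ₗ TensorProduct.map φ ψ ∘ₗ
          (Z ∘ₗ ((a.ε.rTensor A0 ∘ₗ a.Δ).lTensor (D ⊗[ℂ] D))) ∘ₗ (d.Δ).rTensor A0 := by
        rw [E1, LinearMap.lTensor_comp]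
        simp only [LinearMap.comp_assoc]
    _ = _ := by
        rw [a.rT_counit, E2]

end Trans

/-- monoid computation -/
lemma monoid_calc {M : Type*} [Monoid M] (x y z w i x' y' z' w' i' : M)
    (h1 : y * w = y' * w') (h2 : x * ((y * z) * i) = x' * ((y' * z') * i'))
    (h3 : i * y = 1) (h3' : i' * y' = 1) :
    (x * y) * (z * w) = (x' * y') * (z' * w') := by
  have aux : ∀ (x y z w i : M), i * y = 1 →
      (x * y) * (z * w) = (x * ((y * z) * i)) * (y * w) := by
    intro x y z w i h
    simp only [mul_assoc]
    rw [← mul_assoc i y w, h, one_mul]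
  rw [aux x y z w i h3, h2, h1, ← aux x' y' z' w' i' h3']


end Fw


section

open Coalgebra

variable (A : Type*) [Ring A] [HopfAlgebra ℂ A]

noncomputable def aCD : CD A :=
  ⟨comul, counit, Coalgebra.coassoc, Coalgebra.rTensor_counit_comp_comul,
    Coalgebra.lTensor_counit_comp_comul⟩

noncomputable def c2 : CD (A ⊗[ℂ] A) := (aCD A).tens (aCD A)
noncomputable def c3 : CD (A ⊗[ℂ] (A ⊗[ℂ] A)) := (aCD A).tens (c2 A)
noncomputable def c3' : CD ((A ⊗[ℂ] A) ⊗[ℂ] A) := (c2 A).tens (aCD A)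

@[simp] lemma aCD_Δ : (aCD A).Δ = comul := rfl
@[simp] lemma aCD_ε : (aCD A).ε = counit := rfl

lemma convC_eq (σ' τ' : (A ⊗[ℂ] A) →ₗ[ℂ] ℂ) : convC A comul σ' τ' = cvg (c2 A) σ' τ' := rfl

lemma convH_eq (f g : (A ⊗[ℂ] A) →ₗ[ℂ] A) : convH A comul f g = cvg (c2 A) f g := rfl

lemma counit₂_eq : counit₂ A counit = (c2 A).ε := rfl

lemma toA_eq (σ' : (A ⊗[ℂ] A) →ₗ[ℂ] ℂ) : toA A σ' = Algebra.linearMap ℂ A ∘ₗ σ' := rfl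

lemma comul₂_eq : comul₂ A comul = (c2 A).Δ := rfl

lemma deformMul_eq (m' : (A ⊗[ℂ] A) →ₗ[ℂ] A) (σ' σi' : (A ⊗[ℂ] A) →ₗ[ℂ] ℂ) :
    deformMul A comul m' σ' σi'
      = cvg (c2 A) (cvg (c2 A) (Algebra.linearMap ℂ A ∘ₗ σ') m')
          (Algebra.linearMap ℂ A ∘ₗ σi') := rfl

lemma ung_eq_counit₂ : (ung (c2 A) : (A ⊗[ℂ] A) →ₗ[ℂ] ℂ) = counit₂ A counit := by
  rw [counit₂_eq]
  exact ung_C _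

lemma mul_isMor : IsMor (c2 A) (aCD A) (LinearMap.mul' ℂ A) := by
  have key : TensorProduct.map (LinearMap.mul' ℂ A) (LinearMap.mul' ℂ A) ∘ₗ
        (tensorTensorTensorComm ℂ A A A A).toLinearMap = LinearMap.mul' ℂ (A ⊗[ℂ] A) := by
    ext a b x y
    simp [Algebra.TensorProduct.tmul_mul_tmul]
  constructor
  · show comul ∘ₗ LinearMap.mul' ℂ A = _ ∘ₗ tΔ (aCD A) (aCD A)
    unfold tΔ
    show comul ∘ₗ LinearMap.mul' ℂ A = _ ∘ₗ
      (tensorTensorTensorComm ℂ A A A A).toLinearMap ∘ₗ TensorProduct.map comul comul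
    rw [← LinearMap.comp_assoc, key]
    ext a b
    simp
  · show counit ∘ₗ LinearMap.mul' ℂ A = tε (aCD A) (aCD A)
    ext a b
    simp [tε]

lemma r1_isMor : IsMor (aCD A) (c2 A) ((TensorProduct.mk ℂ A A).flip 1) := by
  constructor
  · show (c2 A).Δ ∘ₗ _ = _ ∘ₗ comul
    have step1 : TensorProduct.map
          (Coalgebra.comul (R := ℂ) (A := A)) (Coalgebra.comul (R := ℂ) (A := A)) ∘ₗ
          (TensorProduct.mk ℂ A A).flip 1
        = ((TensorProduct.mk ℂ (A ⊗[ℂ] A) (A ⊗[ℂ] A)).flip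
            ((1 : A) ⊗ₜ[ℂ] (1 : A))) ∘ₗ Coalgebra.comul := by
      refine LinearMap.ext fun x => ?_
      simp [← Algebra.TensorProduct.one_def]
    have step2 : (tensorTensorTensorComm ℂ A A A A).toLinearMap ∘ₗ
          ((TensorProduct.mk ℂ (A ⊗[ℂ] A) (A ⊗[ℂ] A)).flip ((1 : A) ⊗ₜ[ℂ] (1 : A)))
        = TensorProduct.map ((TensorProduct.mk ℂ A A).flip 1)
            ((TensorProduct.mk ℂ A A).flip 1) := by
      ext x y
      simp
    show tΔ (aCD A) (aCD A) ∘ₗ _ = _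
    unfold tΔ
    show ((tensorTensorTensorComm ℂ A A A A).toLinearMap ∘ₗ
      TensorProduct.map comul comul) ∘ₗ (TensorProduct.mk ℂ A A).flip 1 = _
    rw [LinearMap.comp_assoc, step1, ← LinearMap.comp_assoc, step2]
  · show (c2 A).ε ∘ₗ (TensorProduct.mk ℂ A A).flip 1 = counit
    refine LinearMap.ext fun x => ?_
    show tε (aCD A) (aCD A) (x ⊗ₜ[ℂ] (1 : A)) = counit x
    simp [tε]

lemma l1_isMor : IsMor (aCD A) (c2 A) (TensorProduct.mk ℂ A A 1) := by
  constructor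
  · show (c2 A).Δ ∘ₗ _ = _ ∘ₗ comul
    have step1 : TensorProduct.map
          (Coalgebra.comul (R := ℂ) (A := A)) (Coalgebra.comul (R := ℂ) (A := A)) ∘ₗ
          TensorProduct.mk ℂ A A 1
        = (TensorProduct.mk ℂ (A ⊗[ℂ] A) (A ⊗[ℂ] A) ((1 : A) ⊗ₜ[ℂ] (1 : A))) ∘ₗ
            Coalgebra.comul := by
      refine LinearMap.ext fun x => ?_
      simp [← Algebra.TensorProduct.one_def]
    have step2 : (tensorTensorTensorComm ℂ A A A A).toLinearMap ∘ₗ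
          (TensorProduct.mk ℂ (A ⊗[ℂ] A) (A ⊗[ℂ] A) ((1 : A) ⊗ₜ[ℂ] (1 : A)))
        = TensorProduct.map (TensorProduct.mk ℂ A A 1) (TensorProduct.mk ℂ A A 1) := by
      ext x y
      simp
    show tΔ (aCD A) (aCD A) ∘ₗ _ = _
    unfold tΔ
    show ((tensorTensorTensorComm ℂ A A A A).toLinearMap ∘ₗ
      TensorProduct.map comul comul) ∘ₗ TensorProduct.mk ℂ A A 1 = _
    rw [LinearMap.comp_assoc, step1, ← LinearMap.comp_assoc, step2]
  · show (c2 A).ε ∘ₗ TensorProduct.mk ℂ A A 1 = counit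
    refine LinearMap.ext fun x => ?_
    show tε (aCD A) (aCD A) ((1 : A) ⊗ₜ[ℂ] x) = counit x
    simp [tε]

lemma CL (m' : (A ⊗[ℂ] A) →ₗ[ℂ] A) (σ' : (A ⊗[ℂ] A) →ₗ[ℂ] ℂ) :
    cocyLHS A comul m' σ' = cvg (c3 A) (σ' ∘ₗ prL (aCD A)) (σ' ∘ₗ m'.lTensor A) := by
  have br : LinearMap.mul' ℂ ℂ ∘ₗ TensorProduct.map σ' (σ' ∘ₗ m'.lTensor A) ∘ₗ
        (TensorProduct.leftComm ℂ A (A ⊗[ℂ] A) (A ⊗[ℂ] A)).toLinearMap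
      = LinearMap.mul' ℂ ℂ ∘ₗ TensorProduct.map σ' σ' ∘ₗ
          (TensorProduct.leftComm ℂ A (A ⊗[ℂ] A) A).toLinearMap ∘ₗ
            (m'.lTensor (A ⊗[ℂ] A)).lTensor A := by
    ext x y z u v
    simp
  show _ = cvg ((aCD A).tens (c2 A)) _ _
  rw [TL]
  unfold cocyLHS
  rw [show LinearMap.lTensor A ((m'.lTensor (A ⊗[ℂ] A)) ∘ₗ comul₂ A comul)
      = (m'.lTensor (A ⊗[ℂ] A)).lTensor A ∘ₗ ((c2 A).Δ).lTensor A from by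
    rw [← comul₂_eq, LinearMap.lTensor_comp]]
  simp only [← LinearMap.comp_assoc] at br ⊢
  rw [br]

lemma CR (m' : (A ⊗[ℂ] A) →ₗ[ℂ] A) (σ' : (A ⊗[ℂ] A) →ₗ[ℂ] ℂ) :
    cocyRHS A comul m' σ'
      = (cvg (c3' A) (σ' ∘ₗ prR (aCD A)) (σ' ∘ₗ m'.rTensor A)) ∘ₗ
          (TensorProduct.assoc ℂ A A A).symm.toLinearMap := by
  have br : LinearMap.mul' ℂ ℂ ∘ₗ TensorProduct.map σ' (σ' ∘ₗ m'.rTensor A) ∘ₗ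
        (TensorProduct.assoc ℂ (A ⊗[ℂ] A) (A ⊗[ℂ] A) A).toLinearMap
      = LinearMap.mul' ℂ ℂ ∘ₗ TensorProduct.map σ' σ' ∘ₗ
          (TensorProduct.assoc ℂ (A ⊗[ℂ] A) A A).toLinearMap ∘ₗ
            (m'.lTensor (A ⊗[ℂ] A)).rTensor A := by
    ext x y u v z
    simp
  show _ = cvg ((c2 A).tens (aCD A)) _ _ ∘ₗ _
  rw [TR]
  unfold cocyRHS
  rw [show LinearMap.rTensor A ((m'.lTensor (A ⊗[ℂ] A)) ∘ₗ comul₂ A comul)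
      = (m'.lTensor (A ⊗[ℂ] A)).rTensor A ∘ₗ ((c2 A).Δ).rTensor A from by
    rw [← comul₂_eq, LinearMap.rTensor_comp]]
  simp only [← LinearMap.comp_assoc] at br ⊢
  rw [br]


/-- if `σ` is a normalized Hopf 2-cocycle on a Hopf algebra `A` (with
convolution inverse `σinv`) and `τ` is a normalized Hopf 2-cocycle on the deformation
`A_σ` (with convolution inverse `τinv`), then the convolution product `τ ∗ σ` is a
normalized Hopf 2-cocycle on `A` (with convolution inverse `σinv ∗ τinv`), and
`A_{τ∗σ} = (A_σ)_τ` as Hopf algebras (the coalgebra structures agree by definition, and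
the deformed multiplications coincide). -/
theorem conv_cocycle_deformation
    (σ σinv τ τinv : (A ⊗[ℂ] A) →ₗ[ℂ] ℂ)
    (hσ : IsHopf2Cocycle A comul (LinearMap.mul' ℂ A) σ)
    (hσn : IsNormalizedCocycle A counit σ)
    (hσi : IsConvInverse A comul counit σ σinv)
    (hτ : IsHopf2Cocycle A comul (deformMul A comul (LinearMap.mul' ℂ A) σ σinv) τ)
    (hτn : IsNormalizedCocycle A counit τ)
    (hτi : IsConvInverse A comul counit τ τinv) :
    IsHopf2Cocycle A comul (LinearMap.mul' ℂ A) (convC A comul τ σ) ∧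
    IsNormalizedCocycle A counit (convC A comul τ σ) ∧
    IsConvInverse A comul counit (convC A comul τ σ) (convC A comul σinv τinv) ∧
    deformMul A comul (LinearMap.mul' ℂ A) (convC A comul τ σ) (convC A comul σinv τinv)
      = deformMul A comul (deformMul A comul (LinearMap.mul' ℂ A) σ σinv) τ τinv := by
  have assocS := (TensorProduct.assoc ℂ A A A).symm.toLinearMap
  -- map-level normalization facts
  have hσr1 : σ ∘ₗ (TensorProduct.mk ℂ A A).flip 1 = counit :=
    LinearMap.ext fun x => by simpa using (hσn x).1
  have hτr1 : τ ∘ₗ (TensorProduct.mk ℂ A A).flip 1 = counit :=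
    LinearMap.ext fun x => by simpa using (hτn x).1
  have hσl1 : σ ∘ₗ TensorProduct.mk ℂ A A 1 = counit :=
    LinearMap.ext fun x => by simpa using (hσn x).2
  have hτl1 : τ ∘ₗ TensorProduct.mk ℂ A A 1 = counit :=
    LinearMap.ext fun x => by simpa using (hτn x).2
  have countA : (counit : A →ₗ[ℂ] ℂ) = ung (aCD A) := ((ung_C (aCD A)).trans (aCD_ε A)).symm
  letI M2 : Monoid ((A ⊗[ℂ] A) →ₗ[ℂ] ℂ) := (c2 A).mon ℂ
  letI M2A : Monoid ((A ⊗[ℂ] A) →ₗ[ℂ] A) := (c2 A).mon A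
  letI M3 : Monoid ((A ⊗[ℂ] (A ⊗[ℂ] A)) →ₗ[ℂ] ℂ) := (c3 A).mon ℂ
  have e1 : cvg (c2 A) σ σinv = ung (c2 A) := by
    rw [← convC_eq, hσi.1, ← ung_eq_counit₂]
  have e2 : cvg (c2 A) σinv σ = ung (c2 A) := by
    rw [← convC_eq, hσi.2, ← ung_eq_counit₂]
  have e3 : cvg (c2 A) τ τinv = ung (c2 A) := by
    rw [← convC_eq, hτi.1, ← ung_eq_counit₂]
  have e4 : cvg (c2 A) τinv τ = ung (c2 A) := by
    rw [← convC_eq, hτi.2, ← ung_eq_counit₂]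
  -- morphisms
  have morπ : IsMor (c3 A) (c2 A) (prL (aCD A)) := isMor_prL (aCD A) (c2 A)
  have morq1 : IsMor (c3 A) (c2 A) ((LinearMap.mul' ℂ A).lTensor A) :=
    IsMor.tens (IsMor.id (aCD A)) (mul_isMor A)
  have morAs : IsMor (c3 A) (c3' A) (TensorProduct.assoc ℂ A A A).symm.toLinearMap :=
    IsMor.symm (isMor_assoc (aCD A) (aCD A) (aCD A))
  have morp12 : IsMor (c3 A) (c2 A)
      (prR (aCD A) ∘ₗ (TensorProduct.assoc ℂ A A A).symm.toLinearMap) :=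
    IsMor.comp morAs (isMor_prR (c2 A) (aCD A))
  have morq2 : IsMor (c3 A) (c2 A)
      ((LinearMap.mul' ℂ A).rTensor A ∘ₗ (TensorProduct.assoc ℂ A A A).symm.toLinearMap) :=
    IsMor.comp morAs (IsMor.tens (mul_isMor A) (IsMor.id (aCD A)))
  -- unit facts on the triple coalgebra
  have h3 : cvg (c3 A) (σinv ∘ₗ prL (aCD A)) (σ ∘ₗ prL (aCD A)) = ung (c3 A) := by
    rw [← cvg_pullback morπ, ← convC_eq, hσi.2, counit₂_eq, morπ.2, ung_C]
  have h3' : cvg (c3 A)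
      (σinv ∘ₗ (prR (aCD A) ∘ₗ (TensorProduct.assoc ℂ A A A).symm.toLinearMap))
      (σ ∘ₗ (prR (aCD A) ∘ₗ (TensorProduct.assoc ℂ A A A).symm.toLinearMap)) = ung (c3 A) := by
    rw [← cvg_pullback morp12, ← convC_eq, hσi.2, counit₂_eq, morp12.2, ung_C]
  -- h1 from hσ
  have h1 : cvg (c3 A) (σ ∘ₗ prL (aCD A)) (σ ∘ₗ (LinearMap.mul' ℂ A).lTensor A)
      = cvg (c3 A)
          (σ ∘ₗ (prR (aCD A) ∘ₗ (TensorProduct.assoc ℂ A A A).symm.toLinearMap))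
          (σ ∘ₗ ((LinearMap.mul' ℂ A).rTensor A ∘ₗ
            (TensorProduct.assoc ℂ A A A).symm.toLinearMap)) := by
    have h := hσ
    unfold IsHopf2Cocycle at h
    rw [CL, CR] at h
    rw [cvg_pullback morAs] at h
    simp only [LinearMap.comp_assoc] at h
    exact h
  -- h2 from hτ
  have h2 : cvg (c3 A) (τ ∘ₗ prL (aCD A))
        (cvg (c3 A)
          (cvg (c3 A) (σ ∘ₗ prL (aCD A)) (τ ∘ₗ (LinearMap.mul' ℂ A).lTensor A))
          (σinv ∘ₗ prL (aCD A)))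
      = cvg (c3 A)
          (τ ∘ₗ (prR (aCD A) ∘ₗ (TensorProduct.assoc ℂ A A A).symm.toLinearMap))
          (cvg (c3 A)
            (cvg (c3 A)
              (σ ∘ₗ (prR (aCD A) ∘ₗ (TensorProduct.assoc ℂ A A A).symm.toLinearMap))
              (τ ∘ₗ ((LinearMap.mul' ℂ A).rTensor A ∘ₗ
                (TensorProduct.assoc ℂ A A A).symm.toLinearMap)))
            (σinv ∘ₗ (prR (aCD A) ∘ₗ (TensorProduct.assoc ℂ A A A).symm.toLinearMap))) := by
    have h := hτ
    unfold IsHopf2Cocycle at h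
    rw [CL, CR] at h
    rw [deformMul_eq] at h
    rw [SabsR (aCD A) (c2 A) σinv
      (cvg (c2 A) (Algebra.linearMap ℂ A ∘ₗ σ) (LinearMap.mul' ℂ A)) τ] at h
    rw [SabsL (aCD A) (c2 A) σ (LinearMap.mul' ℂ A) τ] at h
    rw [SabsR' (aCD A) (c2 A) σinv
      (cvg (c2 A) (Algebra.linearMap ℂ A ∘ₗ σ) (LinearMap.mul' ℂ A)) τ] at h
    rw [SabsL' (aCD A) (c2 A) σ (LinearMap.mul' ℂ A) τ] at h
    simp only [show (aCD A).tens (c2 A) = c3 A from rfl,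
      show (c2 A).tens (aCD A) = c3' A from rfl] at h
    rw [cvg_pullback morAs, cvg_pullback morAs, cvg_pullback morAs] at h
    simp only [LinearMap.comp_assoc] at h
    exact h
  refine ⟨?_, ?_, ?_, ?_⟩
  · -- the convolution is a Hopf 2-cocycle
    show cocyLHS A comul (LinearMap.mul' ℂ A) (convC A comul τ σ)
        = cocyRHS A comul (LinearMap.mul' ℂ A) (convC A comul τ σ)
    rw [CL, CR, convC_eq]
    rw [cvg_pullback morπ, cvg_pullback morq1, cvg_pullback morAs]
    simp only [LinearMap.comp_assoc]
    rw [cvg_pullback morp12, cvg_pullback morq2]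
    exact monoid_calc
      (τ ∘ₗ prL (aCD A)) (σ ∘ₗ prL (aCD A))
      (τ ∘ₗ (LinearMap.mul' ℂ A).lTensor A) (σ ∘ₗ (LinearMap.mul' ℂ A).lTensor A)
      (σinv ∘ₗ prL (aCD A))
      (τ ∘ₗ (prR (aCD A) ∘ₗ (TensorProduct.assoc ℂ A A A).symm.toLinearMap))
      (σ ∘ₗ (prR (aCD A) ∘ₗ (TensorProduct.assoc ℂ A A A).symm.toLinearMap))
      (τ ∘ₗ ((LinearMap.mul' ℂ A).rTensor A ∘ₗ (TensorProduct.assoc ℂ A A A).symm.toLinearMap))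
      (σ ∘ₗ ((LinearMap.mul' ℂ A).rTensor A ∘ₗ (TensorProduct.assoc ℂ A A A).symm.toLinearMap))
      (σinv ∘ₗ (prR (aCD A) ∘ₗ (TensorProduct.assoc ℂ A A A).symm.toLinearMap))
      h1 h2 h3 h3'
  · -- normalization
    intro x
    have hr : (convC A comul τ σ) ∘ₗ (TensorProduct.mk ℂ A A).flip 1 = counit := by
      rw [convC_eq, cvg_pullback (r1_isMor A), hσr1, hτr1, countA, cvg_one_left]
    have hl : (convC A comul τ σ) ∘ₗ TensorProduct.mk ℂ A A 1 = counit := by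
      rw [convC_eq, cvg_pullback (l1_isMor A), hσl1, hτl1, countA, cvg_one_left]
    constructor
    · have := LinearMap.congr_fun hr x
      simpa using this
    · have := LinearMap.congr_fun hl x
      simpa using this
  · -- convolution inverse
    constructor
    · show convC A comul (convC A comul τ σ) (convC A comul σinv τinv) = counit₂ A counit
      simp only [convC_eq]
      rw [cvg_assoc, ← cvg_assoc (c2 A) σ σinv τinv, e1, cvg_one_left, e3, ung_eq_counit₂]
    · show convC A comul (convC A comul σinv τinv) (convC A comul τ σ) = counit₂ A counit
      simp only [convC_eq]
      rw [cvg_assoc, ← cvg_assoc (c2 A) τinv τ σ, e4, cvg_one_left, e2, ung_eq_counit₂]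
  · -- deformed multiplications coincide
    simp only [deformMul_eq, convC_eq, toA_eq]
    rw [cvg_push, cvg_push]
    simp only [cvg_assoc]


end
end

section
/- Let A be a Hopf algebra and σ a normalized Hopf 2-cocycle on A with convolution inverse σ^{-1}. Then σ^{-1} is a normalized Hopf 2-cocycle on A_σ, and (A_σ)_{σ^{-1}} = A. Consequently the arrows α_σ: A → A_σ between Hopf algebras, with composition α_τ ∘ α_σ = α_{τ∗σ}, identity α_ε, and inverse α_{σ^{-1}}, form a groupoid. -/
open TensorProduct

/-! ### Auxiliary convolution/coalgebra framework -/

structure CoData (C : Type*) [AddCommGroup C] [Module ℂ C] where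
  Δ : C →ₗ[ℂ] C ⊗[ℂ] C
  ε : C →ₗ[ℂ] ℂ
  coassoc : (TensorProduct.assoc ℂ C C C).toLinearMap ∘ₗ LinearMap.rTensor C Δ ∘ₗ Δ
      = LinearMap.lTensor C Δ ∘ₗ Δ
  rCounit : LinearMap.rTensor C ε ∘ₗ Δ = TensorProduct.mk ℂ ℂ C 1
  lCounit : LinearMap.lTensor C ε ∘ₗ Δ = (TensorProduct.mk ℂ C ℂ).flip 1

namespace CoData
variable {C D : Type*} [AddCommGroup C] [Module ℂ C] [AddCommGroup D] [Module ℂ D]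

theorem coassoc' (E : CoData C) :
    LinearMap.rTensor C E.Δ ∘ₗ E.Δ = (TensorProduct.assoc ℂ C C C).symm.toLinearMap
      ∘ₗ (LinearMap.lTensor C E.Δ ∘ₗ E.Δ) := by
  rw [← E.coassoc]
  ext x
  simp

/-- The tensor product of two coalgebras. -/
noncomputable def tmul (E : CoData C) (F : CoData D) : CoData (C ⊗[ℂ] D) where
  Δ := (tensorTensorTensorComm ℂ C C D D).toLinearMap ∘ₗ TensorProduct.map E.Δ F.Δ
  ε := LinearMap.mul' ℂ ℂ ∘ₗ TensorProduct.map E.ε F.ε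
  coassoc := by
    have natR : ∀ y, LinearMap.rTensor (C ⊗[ℂ] D) (map E.Δ F.Δ)
        ((tensorTensorTensorComm ℂ C C D D) y)
        = (tensorTensorTensorComm ℂ (C ⊗[ℂ] C) C (D ⊗[ℂ] D) D)
          (map (LinearMap.rTensor C E.Δ) (LinearMap.rTensor D F.Δ) y) := by
      have : LinearMap.rTensor (C ⊗[ℂ] D) (map E.Δ F.Δ)
            ∘ₗ (tensorTensorTensorComm ℂ C C D D).toLinearMap
          = (tensorTensorTensorComm ℂ (C ⊗[ℂ] C) C (D ⊗[ℂ] D) D).toLinearMap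
            ∘ₗ map (LinearMap.rTensor C E.Δ) (LinearMap.rTensor D F.Δ) := by
        ext c c' d d'; simp
      exact fun y => LinearMap.congr_fun this y
    have natL : ∀ y, LinearMap.lTensor (C ⊗[ℂ] D) (map E.Δ F.Δ)
        ((tensorTensorTensorComm ℂ C C D D) y)
        = (tensorTensorTensorComm ℂ C (C ⊗[ℂ] C) D (D ⊗[ℂ] D))
          (map (LinearMap.lTensor C E.Δ) (LinearMap.lTensor D F.Δ) y) := by
      have : LinearMap.lTensor (C ⊗[ℂ] D) (map E.Δ F.Δ)
            ∘ₗ (tensorTensorTensorComm ℂ C C D D).toLinearMap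
          = (tensorTensorTensorComm ℂ C (C ⊗[ℂ] C) D (D ⊗[ℂ] D)).toLinearMap
            ∘ₗ map (LinearMap.lTensor C E.Δ) (LinearMap.lTensor D F.Δ) := by
        ext c c' d d'; simp
      exact fun y => LinearMap.congr_fun this y
    have SF : ∀ y, (TensorProduct.assoc ℂ (C ⊗[ℂ] D) (C ⊗[ℂ] D) (C ⊗[ℂ] D))
        (LinearMap.rTensor (C ⊗[ℂ] D) (tensorTensorTensorComm ℂ C C D D).toLinearMap
          ((tensorTensorTensorComm ℂ (C ⊗[ℂ] C) C (D ⊗[ℂ] D) D)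
            (map (TensorProduct.assoc ℂ C C C).symm.toLinearMap
              (TensorProduct.assoc ℂ D D D).symm.toLinearMap y)))
        = LinearMap.lTensor (C ⊗[ℂ] D) (tensorTensorTensorComm ℂ C C D D).toLinearMap
            ((tensorTensorTensorComm ℂ C (C ⊗[ℂ] C) D (D ⊗[ℂ] D)) y) := by
      have : (TensorProduct.assoc ℂ (C ⊗[ℂ] D) (C ⊗[ℂ] D) (C ⊗[ℂ] D)).toLinearMap
          ∘ₗ LinearMap.rTensor (C ⊗[ℂ] D) (tensorTensorTensorComm ℂ C C D D).toLinearMap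
          ∘ₗ (tensorTensorTensorComm ℂ (C ⊗[ℂ] C) C (D ⊗[ℂ] D) D).toLinearMap
          ∘ₗ map (TensorProduct.assoc ℂ C C C).symm.toLinearMap
                (TensorProduct.assoc ℂ D D D).symm.toLinearMap
          = LinearMap.lTensor (C ⊗[ℂ] D) (tensorTensorTensorComm ℂ C C D D).toLinearMap
            ∘ₗ (tensorTensorTensorComm ℂ C (C ⊗[ℂ] C) D (D ⊗[ℂ] D)).toLinearMap := by
        ext x; simp
      exact fun y => LinearMap.congr_fun this y
    apply LinearMap.ext
    intro x
    simp only [LinearMap.comp_apply, LinearEquiv.coe_coe, LinearMap.rTensor_comp,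
      LinearMap.lTensor_comp]
    rw [natR, natL]
    have hsplit : map (LinearMap.rTensor C E.Δ) (LinearMap.rTensor D F.Δ) (map E.Δ F.Δ x)
        = map ((TensorProduct.assoc ℂ C C C).symm.toLinearMap
              ∘ₗ (LinearMap.lTensor C E.Δ ∘ₗ E.Δ))
            ((TensorProduct.assoc ℂ D D D).symm.toLinearMap
              ∘ₗ (LinearMap.lTensor D F.Δ ∘ₗ F.Δ)) x := by
      rw [← E.coassoc', ← F.coassoc']
      rw [← LinearMap.comp_apply, ← map_comp]
    rw [hsplit]
    have hsplit2 : map ((TensorProduct.assoc ℂ C C C).symm.toLinearMap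
              ∘ₗ (LinearMap.lTensor C E.Δ ∘ₗ E.Δ))
            ((TensorProduct.assoc ℂ D D D).symm.toLinearMap
              ∘ₗ (LinearMap.lTensor D F.Δ ∘ₗ F.Δ)) x
        = map (TensorProduct.assoc ℂ C C C).symm.toLinearMap
            (TensorProduct.assoc ℂ D D D).symm.toLinearMap
            (map (LinearMap.lTensor C E.Δ) (LinearMap.lTensor D F.Δ) (map E.Δ F.Δ x)) := by
      rw [map_comp, map_comp]; simp [LinearMap.comp_apply]
    rw [hsplit2, SF]
  rCounit := by
    have nat : LinearMap.rTensor (C ⊗[ℂ] D) (LinearMap.mul' ℂ ℂ ∘ₗ map E.ε F.ε)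
          ∘ₗ (tensorTensorTensorComm ℂ C C D D).toLinearMap
        = (LinearMap.rTensor (C ⊗[ℂ] D) (LinearMap.mul' ℂ ℂ)
            ∘ₗ (tensorTensorTensorComm ℂ ℂ C ℂ D).toLinearMap)
          ∘ₗ map (LinearMap.rTensor C E.ε) (LinearMap.rTensor D F.ε) := by
      ext c c' d d'; simp
    rw [← LinearMap.comp_assoc, nat, LinearMap.comp_assoc, ← map_comp, E.rCounit, F.rCounit]
    ext c d
    simp
  lCounit := by
    have nat : LinearMap.lTensor (C ⊗[ℂ] D) (LinearMap.mul' ℂ ℂ ∘ₗ map E.ε F.ε)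
          ∘ₗ (tensorTensorTensorComm ℂ C C D D).toLinearMap
        = (LinearMap.lTensor (C ⊗[ℂ] D) (LinearMap.mul' ℂ ℂ)
            ∘ₗ (tensorTensorTensorComm ℂ C ℂ D ℂ).toLinearMap)
          ∘ₗ map (LinearMap.lTensor C E.ε) (LinearMap.lTensor D F.ε) := by
      ext c c' d d'; simp
    rw [← LinearMap.comp_assoc, nat, LinearMap.comp_assoc, ← map_comp, E.lCounit, F.lCounit]
    ext c d
    simp


/-- collapse `ε(x₁)x₂ = x`. -/
theorem collapse_l (E : CoData C) :
    ((TensorProduct.lid ℂ C).toLinearMap ∘ₗ LinearMap.rTensor C E.ε) ∘ₗ E.Δ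
      = LinearMap.id := by
  rw [LinearMap.comp_assoc, E.rCounit]
  ext c
  simp

theorem collapse_r (E : CoData C) :
    ((TensorProduct.rid ℂ C).toLinearMap ∘ₗ LinearMap.lTensor C E.ε) ∘ₗ E.Δ
      = LinearMap.id := by
  rw [LinearMap.comp_assoc, E.lCounit]
  ext c
  simp

/-- `c ⊗ d ↦ ε(c) • d` -/
noncomputable def eL (E : CoData C) : (C ⊗[ℂ] D) →ₗ[ℂ] D :=
  (TensorProduct.lid ℂ D).toLinearMap ∘ₗ LinearMap.rTensor D E.ε

/-- `c ⊗ d ↦ ε(d) • c` -/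
noncomputable def eR (F : CoData D) : (C ⊗[ℂ] D) →ₗ[ℂ] C :=
  (TensorProduct.rid ℂ C).toLinearMap ∘ₗ LinearMap.lTensor C F.ε

theorem map_split (f : C →ₗ[ℂ] C ⊗[ℂ] C) (g : D →ₗ[ℂ] D ⊗[ℂ] D) :
    map f g = LinearMap.rTensor (D ⊗[ℂ] D) f ∘ₗ LinearMap.lTensor C g := by
  ext c d; simp

theorem map_split' (f : C →ₗ[ℂ] C ⊗[ℂ] C) (g : D →ₗ[ℂ] D ⊗[ℂ] D) :
    map f g = LinearMap.lTensor (C ⊗[ℂ] C) g ∘ₗ LinearMap.rTensor D f := by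
  ext c d; simp


end CoData

section Conv
variable {C C' B : Type*} [AddCommGroup C] [Module ℂ C] [AddCommGroup C'] [Module ℂ C']
  [Ring B] [Algebra ℂ B]

/-- Convolution product. -/
noncomputable def cv (E : CoData C) (f g : C →ₗ[ℂ] B) : C →ₗ[ℂ] B :=
  LinearMap.mul' ℂ B ∘ₗ TensorProduct.map f g ∘ₗ E.Δ

/-- Convolution unit. -/
noncomputable def cu (E : CoData C) : C →ₗ[ℂ] B := Algebra.linearMap ℂ B ∘ₗ E.ε

theorem cv_one_left (E : CoData C) (f : C →ₗ[ℂ] B) : cv E (cu E) f = f := by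
  unfold cv cu
  have h1 : TensorProduct.map (Algebra.linearMap ℂ B ∘ₗ E.ε) f
      = TensorProduct.map (Algebra.linearMap ℂ B) f ∘ₗ LinearMap.rTensor C E.ε := by
    rw [LinearMap.rTensor, ← TensorProduct.map_comp, LinearMap.comp_id]
  rw [h1, LinearMap.comp_assoc, E.rCounit]
  ext c
  simp

theorem cv_one_right (E : CoData C) (f : C →ₗ[ℂ] B) : cv E f (cu E) = f := by
  unfold cv cu
  have h1 : TensorProduct.map f (Algebra.linearMap ℂ B ∘ₗ E.ε)
      = TensorProduct.map f (Algebra.linearMap ℂ B) ∘ₗ LinearMap.lTensor C E.ε := by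
    rw [LinearMap.lTensor, ← TensorProduct.map_comp, LinearMap.comp_id]
  rw [h1, LinearMap.comp_assoc, E.lCounit]
  ext c
  simp

theorem cv_assoc (E : CoData C) (f g h : C →ₗ[ℂ] B) :
    cv E (cv E f g) h = cv E f (cv E g h) := by
  unfold cv
  have hR : TensorProduct.map (LinearMap.mul' ℂ B ∘ₗ TensorProduct.map f g ∘ₗ E.Δ) h
      = TensorProduct.map (LinearMap.mul' ℂ B ∘ₗ TensorProduct.map f g) h
        ∘ₗ LinearMap.rTensor C E.Δ := by
    rw [LinearMap.rTensor, ← TensorProduct.map_comp, LinearMap.comp_id, LinearMap.comp_assoc]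
  have hL : TensorProduct.map f (LinearMap.mul' ℂ B ∘ₗ TensorProduct.map g h ∘ₗ E.Δ)
      = TensorProduct.map f (LinearMap.mul' ℂ B ∘ₗ TensorProduct.map g h)
        ∘ₗ LinearMap.lTensor C E.Δ := by
    rw [LinearMap.lTensor, ← TensorProduct.map_comp, LinearMap.comp_id, LinearMap.comp_assoc]
  rw [hR, hL, LinearMap.comp_assoc, LinearMap.comp_assoc, ← E.coassoc]
  have key : LinearMap.mul' ℂ B ∘ₗ
        TensorProduct.map f (LinearMap.mul' ℂ B ∘ₗ TensorProduct.map g h) ∘ₗ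
        (TensorProduct.assoc ℂ C C C).toLinearMap
      = LinearMap.mul' ℂ B ∘ₗ
        TensorProduct.map (LinearMap.mul' ℂ B ∘ₗ TensorProduct.map f g) h := by
    ext x y z
    simp [mul_assoc]
  calc LinearMap.mul' ℂ B ∘ₗ
        TensorProduct.map (LinearMap.mul' ℂ B ∘ₗ TensorProduct.map f g) h ∘ₗ
        LinearMap.rTensor C E.Δ ∘ₗ E.Δ
      = (LinearMap.mul' ℂ B ∘ₗ
          TensorProduct.map (LinearMap.mul' ℂ B ∘ₗ TensorProduct.map f g) h) ∘ₗ
          (LinearMap.rTensor C E.Δ ∘ₗ E.Δ) := by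
        simp only [LinearMap.comp_assoc]
    _ = (LinearMap.mul' ℂ B ∘ₗ
          TensorProduct.map f (LinearMap.mul' ℂ B ∘ₗ TensorProduct.map g h) ∘ₗ
          (TensorProduct.assoc ℂ C C C).toLinearMap) ∘ₗ (LinearMap.rTensor C E.Δ ∘ₗ E.Δ) := by
        rw [key]
    _ = LinearMap.mul' ℂ B ∘ₗ
          TensorProduct.map f (LinearMap.mul' ℂ B ∘ₗ TensorProduct.map g h) ∘ₗ
          (TensorProduct.assoc ℂ C C C).toLinearMap ∘ₗ LinearMap.rTensor C E.Δ ∘ₗ E.Δ := by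
        simp only [LinearMap.comp_assoc]

/-- Pullback along a comultiplication-compatible map is multiplicative for convolution. -/
theorem cv_pullback (E : CoData C) (E' : CoData C') (φ : C →ₗ[ℂ] C')
    (hφ : TensorProduct.map φ φ ∘ₗ E.Δ = E'.Δ ∘ₗ φ) (f g : C' →ₗ[ℂ] B) :
    cv E (f ∘ₗ φ) (g ∘ₗ φ) = cv E' f g ∘ₗ φ := by
  unfold cv
  rw [TensorProduct.map_comp, LinearMap.comp_assoc, hφ]
  simp only [LinearMap.comp_assoc]

theorem cu_pullback (E : CoData C) (E' : CoData C') (φ : C →ₗ[ℂ] C')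
    (hφ : E'.ε ∘ₗ φ = E.ε) : (cu E' : C' →ₗ[ℂ] B) ∘ₗ φ = cu E := by
  unfold cu
  rw [LinearMap.comp_assoc, hφ]

/-- `η : ℂ → B` pushes convolution of scalar maps to convolution in `B`. -/
theorem cv_toA (E : CoData C) (α β : C →ₗ[ℂ] ℂ) :
    cv E (Algebra.linearMap ℂ B ∘ₗ α) (Algebra.linearMap ℂ B ∘ₗ β)
      = Algebra.linearMap ℂ B ∘ₗ cv E α β := by
  unfold cv
  rw [TensorProduct.map_comp]
  have : LinearMap.mul' ℂ B ∘ₗ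
      TensorProduct.map (Algebra.linearMap ℂ B) (Algebra.linearMap ℂ B)
      = Algebra.linearMap ℂ B ∘ₗ LinearMap.mul' ℂ ℂ := by
    ext x
    simp
  simp only [← LinearMap.comp_assoc]
  rw [this]
  try simp only [LinearMap.comp_assoc]

theorem cu_toA (E : CoData C) : (cu E : C →ₗ[ℂ] B) = Algebra.linearMap ℂ B ∘ₗ (cu E : C →ₗ[ℂ] ℂ) := by
  unfold cu
  ext x
  simp

end Conv

section CoMor
variable {C D G C' D' : Type*} [AddCommGroup C] [Module ℂ C] [AddCommGroup D] [Module ℂ D]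
  [AddCommGroup G] [Module ℂ G] [AddCommGroup C'] [Module ℂ C'] [AddCommGroup D'] [Module ℂ D']

/-- A coalgebra morphism between coalgebra data. -/
structure IsCoMor (E : CoData C) (F : CoData D) (φ : C →ₗ[ℂ] D) : Prop where
  comp_Δ : TensorProduct.map φ φ ∘ₗ E.Δ = F.Δ ∘ₗ φ
  comp_ε : F.ε ∘ₗ φ = E.ε

/-- `ε ∗ ε = ε` for the multiplication of scalars. -/
theorem CoData.eps_mul_eps (E : CoData C) :
    LinearMap.mul' ℂ ℂ ∘ₗ TensorProduct.map E.ε E.ε ∘ₗ E.Δ = E.ε := by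
  have h2 : TensorProduct.map E.ε E.ε
      = LinearMap.rTensor ℂ E.ε ∘ₗ LinearMap.lTensor C E.ε := by
    ext x y; simp
  rw [h2, LinearMap.comp_assoc, E.lCounit]
  ext c; simp

/-- Tensor product of coalgebra morphisms. -/
theorem IsCoMor.tmul {E : CoData C} {F : CoData D} {E' : CoData C'} {F' : CoData D'}
    {φ : C →ₗ[ℂ] C'} {ψ : D →ₗ[ℂ] D'} (hφ : IsCoMor E E' φ) (hψ : IsCoMor F F' ψ) :
    IsCoMor (E.tmul F) (E'.tmul F') (TensorProduct.map φ ψ) where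
  comp_Δ := by
    show TensorProduct.map (map φ ψ) (map φ ψ) ∘ₗ
        ((tensorTensorTensorComm ℂ C C D D).toLinearMap ∘ₗ map E.Δ F.Δ) = _
    have nat : TensorProduct.map (map φ ψ) (map φ ψ)
          ∘ₗ (tensorTensorTensorComm ℂ C C D D).toLinearMap
        = (tensorTensorTensorComm ℂ C' C' D' D').toLinearMap
          ∘ₗ map (map φ φ) (map ψ ψ) := by
      ext c c' d d'; simp
    rw [← LinearMap.comp_assoc, nat, LinearMap.comp_assoc, ← map_comp,
      hφ.comp_Δ, hψ.comp_Δ, map_comp]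
    show _ = ((tensorTensorTensorComm ℂ C' C' D' D').toLinearMap ∘ₗ map E'.Δ F'.Δ)
      ∘ₗ map φ ψ
    rw [LinearMap.comp_assoc]
  comp_ε := by
    show (LinearMap.mul' ℂ ℂ ∘ₗ map E'.ε F'.ε) ∘ₗ map φ ψ
        = LinearMap.mul' ℂ ℂ ∘ₗ map E.ε F.ε
    rw [LinearMap.comp_assoc, ← map_comp, hφ.comp_ε, hψ.comp_ε]

theorem IsCoMor.id {E : CoData C} : IsCoMor E E LinearMap.id where
  comp_Δ := by ext x; simp
  comp_ε := by ext x; simp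

theorem IsCoMor.comp {E : CoData C} {F : CoData D} {H : CoData G}
    {φ : C →ₗ[ℂ] D} {ψ : D →ₗ[ℂ] G} (hψ : IsCoMor F H ψ) (hφ : IsCoMor E F φ) :
    IsCoMor E H (ψ ∘ₗ φ) where
  comp_Δ := by
    rw [map_comp, LinearMap.comp_assoc, hφ.comp_Δ, ← LinearMap.comp_assoc, hψ.comp_Δ,
      LinearMap.comp_assoc]
  comp_ε := by rw [← LinearMap.comp_assoc, hψ.comp_ε, hφ.comp_ε]

/-- `eL` is a coalgebra morphism. -/
theorem IsCoMor.eL (E : CoData C) (F : CoData D) :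
    IsCoMor (E.tmul F) F (CoData.eL E) where
  comp_Δ := by
    have nat : map (CoData.eL E (D := D)) (CoData.eL E)
          ∘ₗ (tensorTensorTensorComm ℂ C C D D).toLinearMap
        = (TensorProduct.lid ℂ (D ⊗[ℂ] D)).toLinearMap
          ∘ₗ LinearMap.rTensor (D ⊗[ℂ] D) (LinearMap.mul' ℂ ℂ ∘ₗ map E.ε E.ε) := by
      ext c c' d d'
      simp [CoData.eL, TensorProduct.smul_tmul', smul_smul, mul_comm]
    have fin : (TensorProduct.lid ℂ (D ⊗[ℂ] D)).toLinearMap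
          ∘ₗ LinearMap.rTensor (D ⊗[ℂ] D) E.ε ∘ₗ LinearMap.lTensor C F.Δ
        = F.Δ ∘ₗ CoData.eL E := by
      ext c d; simp [CoData.eL]
    apply LinearMap.ext; intro x
    show map (CoData.eL E) (CoData.eL E)
      ((tensorTensorTensorComm ℂ C C D D) (map E.Δ F.Δ x)) = (F.Δ ∘ₗ CoData.eL E) x
    have h1 := LinearMap.congr_fun nat (map E.Δ F.Δ x)
    simp only [LinearMap.comp_apply, LinearEquiv.coe_coe] at h1
    rw [h1]
    have h2 : map E.Δ F.Δ x
        = LinearMap.rTensor (D ⊗[ℂ] D) E.Δ (LinearMap.lTensor C F.Δ x) := by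
      rw [CoData.map_split]; rfl
    rw [h2, ← LinearMap.rTensor_comp_apply, LinearMap.comp_assoc, E.eps_mul_eps]
    have h3 := LinearMap.congr_fun fin x
    simp only [LinearMap.comp_apply, LinearEquiv.coe_coe] at h3 ⊢
    exact h3
  comp_ε := by
    have : F.ε ∘ₗ CoData.eL E = LinearMap.mul' ℂ ℂ ∘ₗ map E.ε F.ε := by
      ext c d; simp [CoData.eL, Complex.ext_iff]
    rw [this]; rfl

/-- `eR` is a coalgebra morphism. -/
theorem IsCoMor.eR (E : CoData C) (F : CoData D) :
    IsCoMor (E.tmul F) E (CoData.eR F) where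
  comp_Δ := by
    have nat : map (CoData.eR F (C := C)) (CoData.eR F)
          ∘ₗ (tensorTensorTensorComm ℂ C C D D).toLinearMap
        = (TensorProduct.rid ℂ (C ⊗[ℂ] C)).toLinearMap
          ∘ₗ LinearMap.lTensor (C ⊗[ℂ] C) (LinearMap.mul' ℂ ℂ ∘ₗ map F.ε F.ε) := by
      ext c c' d d'
      simp [CoData.eR, TensorProduct.smul_tmul, smul_smul, mul_comm]
    have fin : (TensorProduct.rid ℂ (C ⊗[ℂ] C)).toLinearMap
          ∘ₗ LinearMap.lTensor (C ⊗[ℂ] C) F.ε ∘ₗ LinearMap.rTensor D E.Δ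
        = E.Δ ∘ₗ CoData.eR F := by
      ext c d; simp [CoData.eR]
    apply LinearMap.ext; intro x
    show map (CoData.eR F) (CoData.eR F)
      ((tensorTensorTensorComm ℂ C C D D) (map E.Δ F.Δ x)) = (E.Δ ∘ₗ CoData.eR F) x
    have h1 := LinearMap.congr_fun nat (map E.Δ F.Δ x)
    simp only [LinearMap.comp_apply, LinearEquiv.coe_coe] at h1
    rw [h1]
    have h2 : map E.Δ F.Δ x
        = LinearMap.lTensor (C ⊗[ℂ] C) F.Δ (LinearMap.rTensor D E.Δ x) := by
      rw [CoData.map_split']; rfl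
    rw [h2, ← LinearMap.lTensor_comp_apply, LinearMap.comp_assoc, F.eps_mul_eps]
    have h3 := LinearMap.congr_fun fin x
    simp only [LinearMap.comp_apply, LinearEquiv.coe_coe] at h3 ⊢
    exact h3
  comp_ε := by
    have : E.ε ∘ₗ CoData.eR F = LinearMap.mul' ℂ ℂ ∘ₗ map E.ε F.ε := by
      ext c d; simp [CoData.eR, Complex.ext_iff, mul_comm]
    rw [this]; rfl

end CoMor

section AssocMor
variable {C D G : Type*} [AddCommGroup C] [Module ℂ C] [AddCommGroup D] [Module ℂ D]
  [AddCommGroup G] [Module ℂ G]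

/-- The associator is a coalgebra morphism. -/
theorem IsCoMor.assocSymm (E : CoData C) (F : CoData D) (H : CoData G) :
    IsCoMor (E.tmul (F.tmul H)) ((E.tmul F).tmul H)
      (TensorProduct.assoc ℂ C D G).symm.toLinearMap where
  comp_Δ := by
    set φ := (TensorProduct.assoc ℂ C D G).symm.toLinearMap
    have hsplitL : map E.Δ ((tensorTensorTensorComm ℂ D D G G).toLinearMap
          ∘ₗ map F.Δ H.Δ)
        = LinearMap.lTensor (C ⊗[ℂ] C) (tensorTensorTensorComm ℂ D D G G).toLinearMap
          ∘ₗ map E.Δ (map F.Δ H.Δ) := by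
      ext c d g; simp
    have hsplitR : map ((tensorTensorTensorComm ℂ C C D D).toLinearMap ∘ₗ map E.Δ F.Δ) H.Δ
        = LinearMap.rTensor (G ⊗[ℂ] G) (tensorTensorTensorComm ℂ C C D D).toLinearMap
          ∘ₗ map (map E.Δ F.Δ) H.Δ := by
      ext c d g; simp
    have hnat : map (map E.Δ F.Δ) H.Δ ∘ₗ φ
        = (TensorProduct.assoc ℂ (C ⊗[ℂ] C) (D ⊗[ℂ] D) (G ⊗[ℂ] G)).symm.toLinearMap
          ∘ₗ map E.Δ (map F.Δ H.Δ) := by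
      ext c d g; simp [φ]
    have big : map φ φ
          ∘ₗ (tensorTensorTensorComm ℂ C C (D ⊗[ℂ] G) (D ⊗[ℂ] G)).toLinearMap
          ∘ₗ LinearMap.lTensor (C ⊗[ℂ] C) (tensorTensorTensorComm ℂ D D G G).toLinearMap
        = (tensorTensorTensorComm ℂ (C ⊗[ℂ] D) (C ⊗[ℂ] D) G G).toLinearMap
          ∘ₗ LinearMap.rTensor (G ⊗[ℂ] G) (tensorTensorTensorComm ℂ C C D D).toLinearMap
          ∘ₗ (TensorProduct.assoc ℂ (C ⊗[ℂ] C) (D ⊗[ℂ] D) (G ⊗[ℂ] G)).symm.toLinearMap := by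
      ext x; simp [φ]
    apply LinearMap.ext; intro x
    show map φ φ ((tensorTensorTensorComm ℂ C C (D ⊗[ℂ] G) (D ⊗[ℂ] G))
        ((map E.Δ ((tensorTensorTensorComm ℂ D D G G).toLinearMap ∘ₗ map F.Δ H.Δ)) x))
      = ((tensorTensorTensorComm ℂ (C ⊗[ℂ] D) (C ⊗[ℂ] D) G G).toLinearMap
          ∘ₗ map ((tensorTensorTensorComm ℂ C C D D).toLinearMap ∘ₗ map E.Δ F.Δ) H.Δ) (φ x)
    have h1 := LinearMap.congr_fun hsplitL x
    simp only [LinearMap.comp_apply, LinearEquiv.coe_coe] at h1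
    rw [h1]
    have h2 := LinearMap.congr_fun big (map E.Δ (map F.Δ H.Δ) x)
    simp only [LinearMap.comp_apply, LinearEquiv.coe_coe] at h2
    rw [h2]
    have h3 := LinearMap.congr_fun hnat x
    simp only [LinearMap.comp_apply, LinearEquiv.coe_coe] at h3
    rw [← h3]
    have h4 := LinearMap.congr_fun hsplitR (φ x)
    simp only [LinearMap.comp_apply, LinearEquiv.coe_coe] at h4
    simp only [LinearMap.comp_apply, LinearEquiv.coe_coe, h4]
  comp_ε := by
    apply LinearMap.ext; intro x
    show (LinearMap.mul' ℂ ℂ) ((map (LinearMap.mul' ℂ ℂ ∘ₗ map E.ε F.ε) H.ε)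
        ((TensorProduct.assoc ℂ C D G).symm x))
      = (LinearMap.mul' ℂ ℂ) ((map E.ε (LinearMap.mul' ℂ ℂ ∘ₗ map F.ε H.ε)) x)
    have : LinearMap.mul' ℂ ℂ ∘ₗ (map (LinearMap.mul' ℂ ℂ ∘ₗ map E.ε F.ε) H.ε)
          ∘ₗ (TensorProduct.assoc ℂ C D G).symm.toLinearMap
        = LinearMap.mul' ℂ ℂ ∘ₗ map E.ε (LinearMap.mul' ℂ ℂ ∘ₗ map F.ε H.ε) := by
      ext c d g; simp [mul_assoc]
    have := LinearMap.congr_fun this x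
    simp only [LinearMap.comp_apply, LinearEquiv.coe_coe] at this
    exact this

end AssocMor

section EvalLemmas
variable {C D : Type*} [AddCommGroup C] [Module ℂ C] [AddCommGroup D] [Module ℂ D]
  (E : CoData C) (F : CoData D)

theorem CoData.eL_Δ (E : CoData C) :
    (CoData.eL E : C ⊗[ℂ] C →ₗ[ℂ] C) ∘ₗ E.Δ = LinearMap.id := E.collapse_l

theorem CoData.eR_Δ (E : CoData C) :
    (CoData.eR E : C ⊗[ℂ] C →ₗ[ℂ] C) ∘ₗ E.Δ = LinearMap.id := E.collapse_r

/-- Convolving a pullback along `eL` on the left. -/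
theorem cv_eL_left (ρ : D →ₗ[ℂ] ℂ) (ψ : (C ⊗[ℂ] D) →ₗ[ℂ] ℂ) :
    cv (E.tmul F) (ρ ∘ₗ CoData.eL E) ψ
      = LinearMap.mul' ℂ ℂ ∘ₗ map ρ ψ ∘ₗ (leftComm ℂ C D D).toLinearMap
          ∘ₗ LinearMap.lTensor C F.Δ := by
  have SC : LinearMap.mul' ℂ ℂ ∘ₗ map (ρ ∘ₗ CoData.eL E) ψ
        ∘ₗ (tensorTensorTensorComm ℂ C C D D).toLinearMap
      = LinearMap.mul' ℂ ℂ ∘ₗ map ρ ψ ∘ₗ (leftComm ℂ C D D).toLinearMap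
        ∘ₗ LinearMap.rTensor (D ⊗[ℂ] D) (CoData.eL E) := by
    ext c c' d d'
    simp only [CoData.eL, CoData.eR, LinearMap.comp_apply, LinearEquiv.coe_coe,
      AlgebraTensorModule.curry_apply, curry_apply, LinearMap.coe_restrictScalars,
      tensorTensorTensorComm_tmul, map_tmul, leftComm_tmul, assoc_tmul, assoc_symm_tmul,
      comm_tmul, LinearMap.rTensor_tmul, LinearMap.lTensor_tmul, lid_tmul, rid_tmul,
      TensorProduct.tmul_smul, ← TensorProduct.smul_tmul', map_smul, LinearMap.mul'_apply,
      smul_eq_mul]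
    ring
  apply LinearMap.ext; intro x
  show (LinearMap.mul' ℂ ℂ) ((map (ρ ∘ₗ CoData.eL E) ψ)
      ((tensorTensorTensorComm ℂ C C D D) ((map E.Δ F.Δ) x))) = _
  have h2 : map E.Δ F.Δ x
      = LinearMap.rTensor (D ⊗[ℂ] D) E.Δ (LinearMap.lTensor C F.Δ x) := by
    rw [CoData.map_split]; rfl
  have h1 := LinearMap.congr_fun SC (map E.Δ F.Δ x)
  simp only [LinearMap.comp_apply, LinearEquiv.coe_coe] at h1
  rw [h1, h2, ← LinearMap.rTensor_comp_apply, CoData.eL_Δ, LinearMap.rTensor_id]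
  simp only [LinearMap.comp_apply, LinearEquiv.coe_coe, LinearMap.id_apply]

/-- Convolving a pullback along `eL` on the right. -/
theorem cv_eL_right (ρ : D →ₗ[ℂ] ℂ) (ψ : (C ⊗[ℂ] D) →ₗ[ℂ] ℂ) :
    cv (E.tmul F) ψ (ρ ∘ₗ CoData.eL E)
      = LinearMap.mul' ℂ ℂ ∘ₗ map ψ ρ ∘ₗ (TensorProduct.assoc ℂ C D D).symm.toLinearMap
          ∘ₗ LinearMap.lTensor C F.Δ := by
  have SC : LinearMap.mul' ℂ ℂ ∘ₗ map ψ (ρ ∘ₗ CoData.eL E)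
        ∘ₗ (tensorTensorTensorComm ℂ C C D D).toLinearMap
      = LinearMap.mul' ℂ ℂ ∘ₗ map ψ ρ ∘ₗ (TensorProduct.assoc ℂ C D D).symm.toLinearMap
        ∘ₗ LinearMap.rTensor (D ⊗[ℂ] D) (CoData.eR E) := by
    ext c c' d d'
    simp only [CoData.eL, CoData.eR, LinearMap.comp_apply, LinearEquiv.coe_coe,
      AlgebraTensorModule.curry_apply, curry_apply, LinearMap.coe_restrictScalars,
      tensorTensorTensorComm_tmul, map_tmul, leftComm_tmul, assoc_tmul, assoc_symm_tmul,
      comm_tmul, LinearMap.rTensor_tmul, LinearMap.lTensor_tmul, lid_tmul, rid_tmul,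
      TensorProduct.tmul_smul, ← TensorProduct.smul_tmul', map_smul, LinearMap.mul'_apply,
      smul_eq_mul]
    ring
  apply LinearMap.ext; intro x
  show (LinearMap.mul' ℂ ℂ) ((map ψ (ρ ∘ₗ CoData.eL E))
      ((tensorTensorTensorComm ℂ C C D D) ((map E.Δ F.Δ) x))) = _
  have h2 : map E.Δ F.Δ x
      = LinearMap.rTensor (D ⊗[ℂ] D) E.Δ (LinearMap.lTensor C F.Δ x) := by
    rw [CoData.map_split]; rfl
  have h1 := LinearMap.congr_fun SC (map E.Δ F.Δ x)
  simp only [LinearMap.comp_apply, LinearEquiv.coe_coe] at h1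
  rw [h1, h2, ← LinearMap.rTensor_comp_apply, CoData.eR_Δ, LinearMap.rTensor_id]
  simp only [LinearMap.comp_apply, LinearEquiv.coe_coe, LinearMap.id_apply]

/-- Convolving a pullback along `eR` on the left. -/
theorem cv_eR_left (ρ : C →ₗ[ℂ] ℂ) (ψ : (C ⊗[ℂ] D) →ₗ[ℂ] ℂ) :
    cv (E.tmul F) (ρ ∘ₗ CoData.eR F) ψ
      = LinearMap.mul' ℂ ℂ ∘ₗ map ρ ψ ∘ₗ (TensorProduct.assoc ℂ C C D).toLinearMap
          ∘ₗ LinearMap.rTensor D E.Δ := by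
  have SC : LinearMap.mul' ℂ ℂ ∘ₗ map (ρ ∘ₗ CoData.eR F) ψ
        ∘ₗ (tensorTensorTensorComm ℂ C C D D).toLinearMap
      = LinearMap.mul' ℂ ℂ ∘ₗ map ρ ψ ∘ₗ (TensorProduct.assoc ℂ C C D).toLinearMap
        ∘ₗ LinearMap.lTensor (C ⊗[ℂ] C) (CoData.eL F) := by
    ext c c' d d'
    simp only [CoData.eL, CoData.eR, LinearMap.comp_apply, LinearEquiv.coe_coe,
      AlgebraTensorModule.curry_apply, curry_apply, LinearMap.coe_restrictScalars,
      tensorTensorTensorComm_tmul, map_tmul, leftComm_tmul, assoc_tmul, assoc_symm_tmul,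
      comm_tmul, LinearMap.rTensor_tmul, LinearMap.lTensor_tmul, lid_tmul, rid_tmul,
      TensorProduct.tmul_smul, ← TensorProduct.smul_tmul', map_smul, LinearMap.mul'_apply,
      smul_eq_mul]
    ring
  apply LinearMap.ext; intro x
  show (LinearMap.mul' ℂ ℂ) ((map (ρ ∘ₗ CoData.eR F) ψ)
      ((tensorTensorTensorComm ℂ C C D D) ((map E.Δ F.Δ) x))) = _
  have h2 : map E.Δ F.Δ x
      = LinearMap.lTensor (C ⊗[ℂ] C) F.Δ (LinearMap.rTensor D E.Δ x) := by
    rw [CoData.map_split']; rfl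
  have h1 := LinearMap.congr_fun SC (map E.Δ F.Δ x)
  simp only [LinearMap.comp_apply, LinearEquiv.coe_coe] at h1
  rw [h1, h2, ← LinearMap.lTensor_comp_apply, CoData.eL_Δ, LinearMap.lTensor_id]
  simp only [LinearMap.comp_apply, LinearEquiv.coe_coe, LinearMap.id_apply]

/-- Convolving a pullback along `eR` on the right. -/
theorem cv_eR_right (ρ : C →ₗ[ℂ] ℂ) (ψ : (C ⊗[ℂ] D) →ₗ[ℂ] ℂ) :
    cv (E.tmul F) ψ (ρ ∘ₗ CoData.eR F)
      = LinearMap.mul' ℂ ℂ ∘ₗ map ψ ρ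
          ∘ₗ ((TensorProduct.assoc ℂ C D C).symm.toLinearMap
            ∘ₗ LinearMap.lTensor C (TensorProduct.comm ℂ C D).toLinearMap
            ∘ₗ (TensorProduct.assoc ℂ C C D).toLinearMap)
          ∘ₗ LinearMap.rTensor D E.Δ := by
  have SC : LinearMap.mul' ℂ ℂ ∘ₗ map ψ (ρ ∘ₗ CoData.eR F)
        ∘ₗ (tensorTensorTensorComm ℂ C C D D).toLinearMap
      = LinearMap.mul' ℂ ℂ ∘ₗ map ψ ρ
          ∘ₗ ((TensorProduct.assoc ℂ C D C).symm.toLinearMap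
            ∘ₗ LinearMap.lTensor C (TensorProduct.comm ℂ C D).toLinearMap
            ∘ₗ (TensorProduct.assoc ℂ C C D).toLinearMap)
          ∘ₗ LinearMap.lTensor (C ⊗[ℂ] C) (CoData.eR F) := by
    ext c c' d d'
    simp only [CoData.eL, CoData.eR, LinearMap.comp_apply, LinearEquiv.coe_coe,
      AlgebraTensorModule.curry_apply, curry_apply, LinearMap.coe_restrictScalars,
      tensorTensorTensorComm_tmul, map_tmul, leftComm_tmul, assoc_tmul, assoc_symm_tmul,
      comm_tmul, LinearMap.rTensor_tmul, LinearMap.lTensor_tmul, lid_tmul, rid_tmul,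
      TensorProduct.tmul_smul, ← TensorProduct.smul_tmul', map_smul, LinearMap.mul'_apply,
      smul_eq_mul]
    ring
  apply LinearMap.ext; intro x
  show (LinearMap.mul' ℂ ℂ) ((map ψ (ρ ∘ₗ CoData.eR F))
      ((tensorTensorTensorComm ℂ C C D D) ((map E.Δ F.Δ) x))) = _
  have h2 : map E.Δ F.Δ x
      = LinearMap.lTensor (C ⊗[ℂ] C) F.Δ (LinearMap.rTensor D E.Δ x) := by
    rw [CoData.map_split']; rfl
  have h1 := LinearMap.congr_fun SC (map E.Δ F.Δ x)
  simp only [LinearMap.comp_apply, LinearEquiv.coe_coe] at h1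
  rw [h1, h2, ← LinearMap.lTensor_comp_apply, CoData.eR_Δ, LinearMap.lTensor_id]
  simp only [LinearMap.comp_apply, LinearEquiv.coe_coe, LinearMap.id_apply]

end EvalLemmas

section BialgMor
variable (A : Type*) [Ring A] [Bialgebra ℂ A]

/-- The coalgebra data of a coalgebra instance. -/
noncomputable def coA : CoData A :=
  ⟨Coalgebra.comul, Coalgebra.counit, Coalgebra.coassoc,
    Coalgebra.rTensor_counit_comp_comul, Coalgebra.lTensor_counit_comp_comul⟩

/-- Multiplication is a coalgebra morphism (bialgebra axiom). -/
theorem mulMor : IsCoMor ((coA A).tmul (coA A)) (coA A) (LinearMap.mul' ℂ A) where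
  comp_Δ := by
    have aux : ∀ u v : A ⊗[ℂ] A,
        map (LinearMap.mul' ℂ A) (LinearMap.mul' ℂ A)
          ((tensorTensorTensorComm ℂ A A A A) (u ⊗ₜ[ℂ] v)) = u * v := by
      intro u v
      induction u with
      | zero => simp [TensorProduct.zero_tmul]
      | tmul a b =>
        induction v with
        | zero => simp [TensorProduct.tmul_zero]
        | tmul c d => simp [Algebra.TensorProduct.tmul_mul_tmul]
        | add x y hx hy => simp [TensorProduct.tmul_add, hx, hy, mul_add]
      | add x y hx hy => simp [TensorProduct.add_tmul, hx, hy, add_mul]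
    ext a b
    show map (LinearMap.mul' ℂ A) (LinearMap.mul' ℂ A)
        ((tensorTensorTensorComm ℂ A A A A)
          ((map Coalgebra.comul Coalgebra.comul) (a ⊗ₜ[ℂ] b)))
      = (coA A).Δ (LinearMap.mul' ℂ A (a ⊗ₜ[ℂ] b))
    rw [map_tmul, aux]
    show _ = Coalgebra.comul (a * b)
    rw [Bialgebra.comul_mul]
  comp_ε := by
    ext a b
    show Coalgebra.counit ((LinearMap.mul' ℂ A) (a ⊗ₜ[ℂ] b))
      = (LinearMap.mul' ℂ ℂ) ((map Coalgebra.counit Coalgebra.counit) (a ⊗ₜ[ℂ] b))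
    simp

/-- `a ↦ a ⊗ 1` is a coalgebra morphism. -/
theorem j₁Mor : IsCoMor (coA A) ((coA A).tmul (coA A))
    ((TensorProduct.mk ℂ A A).flip 1) where
  comp_Δ := by
    have aux : ∀ u : A ⊗[ℂ] A,
        map ((TensorProduct.mk ℂ A A).flip 1) ((TensorProduct.mk ℂ A A).flip 1) u
          = (tensorTensorTensorComm ℂ A A A A) (u ⊗ₜ[ℂ] ((1 : A) ⊗ₜ[ℂ] (1 : A))) := by
      intro u
      induction u with
      | zero => simp [TensorProduct.zero_tmul]
      | tmul a b => simp
      | add x y hx hy => simp [TensorProduct.add_tmul, hx, hy]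
    ext a
    show map ((TensorProduct.mk ℂ A A).flip 1) ((TensorProduct.mk ℂ A A).flip 1)
        (Coalgebra.comul a)
      = (tensorTensorTensorComm ℂ A A A A)
          ((map Coalgebra.comul Coalgebra.comul) (a ⊗ₜ[ℂ] (1 : A)))
    rw [aux, map_tmul]
    congr 1
    congr 1
    rw [Bialgebra.comul_one, Algebra.TensorProduct.one_def]
  comp_ε := by
    ext a
    show (LinearMap.mul' ℂ ℂ) ((map Coalgebra.counit Coalgebra.counit)
        (a ⊗ₜ[ℂ] (1 : A))) = Coalgebra.counit a
    simp

/-- `a ↦ 1 ⊗ a` is a coalgebra morphism. -/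
theorem j₂Mor : IsCoMor (coA A) ((coA A).tmul (coA A))
    (TensorProduct.mk ℂ A A 1) where
  comp_Δ := by
    have aux : ∀ u : A ⊗[ℂ] A,
        map (TensorProduct.mk ℂ A A 1) (TensorProduct.mk ℂ A A 1) u
          = (tensorTensorTensorComm ℂ A A A A) (((1 : A) ⊗ₜ[ℂ] (1 : A)) ⊗ₜ[ℂ] u) := by
      intro u
      induction u with
      | zero => simp [TensorProduct.tmul_zero]
      | tmul a b => simp
      | add x y hx hy => simp [TensorProduct.tmul_add, hx, hy]
    ext a
    show map (TensorProduct.mk ℂ A A 1) (TensorProduct.mk ℂ A A 1)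
        (Coalgebra.comul a)
      = (tensorTensorTensorComm ℂ A A A A)
          ((map Coalgebra.comul Coalgebra.comul) ((1 : A) ⊗ₜ[ℂ] a))
    rw [aux, map_tmul]
    congr 1
    congr 1
    rw [Bialgebra.comul_one, Algebra.TensorProduct.one_def]
  comp_ε := by
    ext a
    show (LinearMap.mul' ℂ ℂ) ((map Coalgebra.counit Coalgebra.counit)
        ((1 : A) ⊗ₜ[ℂ] a)) = Coalgebra.counit a
    simp

end BialgMor

section MainLemmas
open Coalgebra
variable (A : Type*) [Ring A] [HopfAlgebra ℂ A]

local notation "𝔈₁" => coA A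
local notation "𝔈₂" => CoData.tmul (coA A) (coA A)
local notation "𝔈₃" => CoData.tmul (coA A) (CoData.tmul (coA A) (coA A))
local notation "𝔈₃'" => CoData.tmul (CoData.tmul (coA A) (coA A)) (coA A)
local notation "𝔪" => LinearMap.mul' ℂ A

theorem L1 (m' : A ⊗[ℂ] A →ₗ[ℂ] A) (τ : A ⊗[ℂ] A →ₗ[ℂ] ℂ) :
    cocyLHS A Coalgebra.comul m' τ
      = cv 𝔈₃ (τ ∘ₗ CoData.eL 𝔈₁) (τ ∘ₗ LinearMap.lTensor A m') := by
  have SCL2 : LinearMap.mul' ℂ ℂ ∘ₗ map τ τ ∘ₗ (leftComm ℂ A (A ⊗[ℂ] A) A).toLinearMap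
        ∘ₗ LinearMap.lTensor A (LinearMap.lTensor (A ⊗[ℂ] A) m')
      = LinearMap.mul' ℂ ℂ ∘ₗ map τ (τ ∘ₗ LinearMap.lTensor A m')
        ∘ₗ (leftComm ℂ A (A ⊗[ℂ] A) (A ⊗[ℂ] A)).toLinearMap := by
    ext a b c d e; simp
  rw [cv_eL_left]
  apply LinearMap.ext; intro x
  show (LinearMap.mul' ℂ ℂ) ((map τ τ) ((leftComm ℂ A (A ⊗[ℂ] A) A)
      ((LinearMap.lTensor A (LinearMap.lTensor (A ⊗[ℂ] A) m'
        ∘ₗ comul₂ A Coalgebra.comul)) x)))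
    = (LinearMap.mul' ℂ ℂ) ((map τ (τ ∘ₗ LinearMap.lTensor A m'))
        ((leftComm ℂ A (A ⊗[ℂ] A) (A ⊗[ℂ] A))
          ((LinearMap.lTensor A (comul₂ A Coalgebra.comul)) x)))
  rw [LinearMap.lTensor_comp, LinearMap.comp_apply]
  have h := LinearMap.congr_fun SCL2 ((LinearMap.lTensor A (comul₂ A Coalgebra.comul)) x)
  simp only [LinearMap.comp_apply, LinearEquiv.coe_coe] at h
  exact h

theorem L2 (m' : A ⊗[ℂ] A →ₗ[ℂ] A) (τ : A ⊗[ℂ] A →ₗ[ℂ] ℂ) :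
    cocyRHS A Coalgebra.comul m' τ
      = cv 𝔈₃' (τ ∘ₗ CoData.eR 𝔈₁) (τ ∘ₗ LinearMap.rTensor A m')
        ∘ₗ (TensorProduct.assoc ℂ A A A).symm.toLinearMap := by
  have SCR2 : LinearMap.mul' ℂ ℂ ∘ₗ map τ τ
        ∘ₗ (TensorProduct.assoc ℂ (A ⊗[ℂ] A) A A).toLinearMap
        ∘ₗ LinearMap.rTensor A (LinearMap.lTensor (A ⊗[ℂ] A) m')
      = LinearMap.mul' ℂ ℂ ∘ₗ map τ (τ ∘ₗ LinearMap.rTensor A m')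
        ∘ₗ (TensorProduct.assoc ℂ (A ⊗[ℂ] A) (A ⊗[ℂ] A) A).toLinearMap := by
    ext a b c d e; simp
  rw [cv_eR_left]
  apply LinearMap.ext; intro x
  show (LinearMap.mul' ℂ ℂ) ((map τ τ) ((TensorProduct.assoc ℂ (A ⊗[ℂ] A) A A)
      ((LinearMap.rTensor A (LinearMap.lTensor (A ⊗[ℂ] A) m'
        ∘ₗ comul₂ A Coalgebra.comul)) ((TensorProduct.assoc ℂ A A A).symm x))))
    = (LinearMap.mul' ℂ ℂ) ((map τ (τ ∘ₗ LinearMap.rTensor A m'))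
        ((TensorProduct.assoc ℂ (A ⊗[ℂ] A) (A ⊗[ℂ] A) A)
          ((LinearMap.rTensor A (comul₂ A Coalgebra.comul))
            ((TensorProduct.assoc ℂ A A A).symm x))))
  rw [LinearMap.rTensor_comp, LinearMap.comp_apply]
  have h := LinearMap.congr_fun SCR2
    ((LinearMap.rTensor A (comul₂ A Coalgebra.comul)) ((TensorProduct.assoc ℂ A A A).symm x))
  simp only [LinearMap.comp_apply, LinearEquiv.coe_coe] at h
  exact h
end MainLemmas

section AbsLemmas
open Coalgebra
variable (A : Type*) [Ring A] [HopfAlgebra ℂ A]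

local notation "𝔈₁" => coA A
local notation "𝔈₂" => CoData.tmul (coA A) (coA A)
local notation "𝔈₃" => CoData.tmul (coA A) (CoData.tmul (coA A) (coA A))
local notation "𝔈₃'" => CoData.tmul (CoData.tmul (coA A) (coA A)) (coA A)

set_option maxHeartbeats 1000000

theorem absL (ρ τ : A ⊗[ℂ] A →ₗ[ℂ] ℂ) (g : A ⊗[ℂ] A →ₗ[ℂ] A) :
    τ ∘ₗ LinearMap.lTensor A (cv 𝔈₂ (Algebra.linearMap ℂ A ∘ₗ ρ) g)
      = cv 𝔈₃ (ρ ∘ₗ CoData.eL 𝔈₁) (τ ∘ₗ LinearMap.lTensor A g) := by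
  have SA : τ ∘ₗ LinearMap.lTensor A
        (LinearMap.mul' ℂ A ∘ₗ map (Algebra.linearMap ℂ A ∘ₗ ρ) g)
      = LinearMap.mul' ℂ ℂ ∘ₗ map ρ (τ ∘ₗ LinearMap.lTensor A g)
        ∘ₗ (leftComm ℂ A (A ⊗[ℂ] A) (A ⊗[ℂ] A)).toLinearMap := by
    ext a b c d e
    simp only [LinearMap.comp_apply, LinearEquiv.coe_coe, AlgebraTensorModule.curry_apply,
      curry_apply, LinearMap.coe_restrictScalars, LinearMap.lTensor_tmul, map_tmul,
      Algebra.linearMap_apply, LinearMap.mul'_apply, leftComm_tmul, ← Algebra.smul_def,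
      TensorProduct.tmul_smul, map_smul, smul_eq_mul]
  rw [cv_eL_left]
  apply LinearMap.ext; intro x
  show τ ((LinearMap.lTensor A (LinearMap.mul' ℂ A
      ∘ₗ map (Algebra.linearMap ℂ A ∘ₗ ρ) g ∘ₗ (CoData.tmul (coA A) (coA A)).Δ)) x)
    = (LinearMap.mul' ℂ ℂ) ((map ρ (τ ∘ₗ LinearMap.lTensor A g))
        ((leftComm ℂ A (A ⊗[ℂ] A) (A ⊗[ℂ] A))
          ((LinearMap.lTensor A (CoData.tmul (coA A) (coA A)).Δ) x)))
  rw [← LinearMap.comp_assoc, LinearMap.lTensor_comp, LinearMap.comp_apply]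
  have h := LinearMap.congr_fun SA
    ((LinearMap.lTensor A (CoData.tmul (coA A) (coA A)).Δ) x)
  simp only [LinearMap.comp_apply, LinearEquiv.coe_coe] at h
  exact h

theorem absR (ρ τ : A ⊗[ℂ] A →ₗ[ℂ] ℂ) (g : A ⊗[ℂ] A →ₗ[ℂ] A) :
    τ ∘ₗ LinearMap.lTensor A (cv 𝔈₂ g (Algebra.linearMap ℂ A ∘ₗ ρ))
      = cv 𝔈₃ (τ ∘ₗ LinearMap.lTensor A g) (ρ ∘ₗ CoData.eL 𝔈₁) := by
  have SA : τ ∘ₗ LinearMap.lTensor A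
        (LinearMap.mul' ℂ A ∘ₗ map g (Algebra.linearMap ℂ A ∘ₗ ρ))
      = LinearMap.mul' ℂ ℂ ∘ₗ map (τ ∘ₗ LinearMap.lTensor A g) ρ
        ∘ₗ (TensorProduct.assoc ℂ A (A ⊗[ℂ] A) (A ⊗[ℂ] A)).symm.toLinearMap := by
    ext a b c d e
    simp only [LinearMap.comp_apply, LinearEquiv.coe_coe, AlgebraTensorModule.curry_apply,
      curry_apply, LinearMap.coe_restrictScalars, LinearMap.lTensor_tmul, map_tmul,
      Algebra.linearMap_apply, LinearMap.mul'_apply, assoc_symm_tmul, ← Algebra.smul_def,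
      mul_smul_comm, Algebra.smul_def, mul_comm]
    rw [← Algebra.commutes (ρ (d ⊗ₜ[ℂ] e))]
    simp [← Algebra.smul_def, TensorProduct.tmul_smul, smul_eq_mul, mul_comm]
  rw [cv_eL_right]
  apply LinearMap.ext; intro x
  show τ ((LinearMap.lTensor A (LinearMap.mul' ℂ A
      ∘ₗ map g (Algebra.linearMap ℂ A ∘ₗ ρ) ∘ₗ (CoData.tmul (coA A) (coA A)).Δ)) x)
    = (LinearMap.mul' ℂ ℂ) ((map (τ ∘ₗ LinearMap.lTensor A g) ρ)
        ((TensorProduct.assoc ℂ A (A ⊗[ℂ] A) (A ⊗[ℂ] A)).symm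
          ((LinearMap.lTensor A (CoData.tmul (coA A) (coA A)).Δ) x)))
  rw [← LinearMap.comp_assoc, LinearMap.lTensor_comp, LinearMap.comp_apply]
  have h := LinearMap.congr_fun SA
    ((LinearMap.lTensor A (CoData.tmul (coA A) (coA A)).Δ) x)
  simp only [LinearMap.comp_apply, LinearEquiv.coe_coe] at h
  exact h

theorem absL' (ρ τ : A ⊗[ℂ] A →ₗ[ℂ] ℂ) (g : A ⊗[ℂ] A →ₗ[ℂ] A) :
    τ ∘ₗ LinearMap.rTensor A (cv 𝔈₂ (Algebra.linearMap ℂ A ∘ₗ ρ) g)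
      = cv 𝔈₃' (ρ ∘ₗ CoData.eR 𝔈₁) (τ ∘ₗ LinearMap.rTensor A g) := by
  have SA : τ ∘ₗ LinearMap.rTensor A
        (LinearMap.mul' ℂ A ∘ₗ map (Algebra.linearMap ℂ A ∘ₗ ρ) g)
      = LinearMap.mul' ℂ ℂ ∘ₗ map ρ (τ ∘ₗ LinearMap.rTensor A g)
        ∘ₗ (TensorProduct.assoc ℂ (A ⊗[ℂ] A) (A ⊗[ℂ] A) A).toLinearMap := by
    ext a b c d e
    simp only [LinearMap.comp_apply, LinearEquiv.coe_coe, AlgebraTensorModule.curry_apply,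
      curry_apply, LinearMap.coe_restrictScalars, LinearMap.rTensor_tmul, map_tmul,
      Algebra.linearMap_apply, LinearMap.mul'_apply, assoc_tmul, ← Algebra.smul_def,
      ← TensorProduct.smul_tmul', map_smul, smul_eq_mul]
  rw [cv_eR_left]
  apply LinearMap.ext; intro x
  show τ ((LinearMap.rTensor A (LinearMap.mul' ℂ A
      ∘ₗ map (Algebra.linearMap ℂ A ∘ₗ ρ) g ∘ₗ (CoData.tmul (coA A) (coA A)).Δ)) x)
    = (LinearMap.mul' ℂ ℂ) ((map ρ (τ ∘ₗ LinearMap.rTensor A g))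
        ((TensorProduct.assoc ℂ (A ⊗[ℂ] A) (A ⊗[ℂ] A) A)
          ((LinearMap.rTensor A (CoData.tmul (coA A) (coA A)).Δ) x)))
  rw [← LinearMap.comp_assoc, LinearMap.rTensor_comp, LinearMap.comp_apply]
  have h := LinearMap.congr_fun SA
    ((LinearMap.rTensor A (CoData.tmul (coA A) (coA A)).Δ) x)
  simp only [LinearMap.comp_apply, LinearEquiv.coe_coe] at h
  exact h

theorem absR' (ρ τ : A ⊗[ℂ] A →ₗ[ℂ] ℂ) (g : A ⊗[ℂ] A →ₗ[ℂ] A) :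
    τ ∘ₗ LinearMap.rTensor A (cv 𝔈₂ g (Algebra.linearMap ℂ A ∘ₗ ρ))
      = cv 𝔈₃' (τ ∘ₗ LinearMap.rTensor A g) (ρ ∘ₗ CoData.eR 𝔈₁) := by
  have SA : τ ∘ₗ LinearMap.rTensor A
        (LinearMap.mul' ℂ A ∘ₗ map g (Algebra.linearMap ℂ A ∘ₗ ρ))
      = LinearMap.mul' ℂ ℂ ∘ₗ map (τ ∘ₗ LinearMap.rTensor A g) ρ
        ∘ₗ ((TensorProduct.assoc ℂ (A ⊗[ℂ] A) A (A ⊗[ℂ] A)).symm.toLinearMap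
          ∘ₗ LinearMap.lTensor (A ⊗[ℂ] A) (TensorProduct.comm ℂ (A ⊗[ℂ] A) A).toLinearMap
          ∘ₗ (TensorProduct.assoc ℂ (A ⊗[ℂ] A) (A ⊗[ℂ] A) A).toLinearMap) := by
    ext a b c d e
    simp only [LinearMap.comp_apply, LinearEquiv.coe_coe, AlgebraTensorModule.curry_apply,
      curry_apply, LinearMap.coe_restrictScalars, LinearMap.rTensor_tmul,
      LinearMap.lTensor_tmul, map_tmul, Algebra.linearMap_apply, LinearMap.mul'_apply,
      assoc_tmul, assoc_symm_tmul, comm_tmul, mul_smul_comm, ← Algebra.smul_def]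
    rw [← Algebra.commutes (ρ (c ⊗ₜ[ℂ] d))]
    simp [← Algebra.smul_def, ← TensorProduct.smul_tmul', map_smul, smul_eq_mul, mul_comm]
  rw [cv_eR_right]
  apply LinearMap.ext; intro x
  show τ ((LinearMap.rTensor A (LinearMap.mul' ℂ A
      ∘ₗ map g (Algebra.linearMap ℂ A ∘ₗ ρ) ∘ₗ (CoData.tmul (coA A) (coA A)).Δ)) x)
    = (LinearMap.mul' ℂ ℂ) ((map (τ ∘ₗ LinearMap.rTensor A g) ρ)
        (((TensorProduct.assoc ℂ (A ⊗[ℂ] A) A (A ⊗[ℂ] A)).symm.toLinearMap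
          ∘ₗ LinearMap.lTensor (A ⊗[ℂ] A) (TensorProduct.comm ℂ (A ⊗[ℂ] A) A).toLinearMap
          ∘ₗ (TensorProduct.assoc ℂ (A ⊗[ℂ] A) (A ⊗[ℂ] A) A).toLinearMap)
          ((LinearMap.rTensor A (CoData.tmul (coA A) (coA A)).Δ) x)))
  rw [← LinearMap.comp_assoc, LinearMap.rTensor_comp, LinearMap.comp_apply]
  have h := LinearMap.congr_fun SA
    ((LinearMap.rTensor A (CoData.tmul (coA A) (coA A)).Δ) x)
  simp only [LinearMap.comp_apply, LinearEquiv.coe_coe] at h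
  exact h

end AbsLemmas

section Helpers
variable {C : Type*} [AddCommGroup C] [Module ℂ C]

theorem cu_eps (E : CoData C) : (cu E : C →ₗ[ℂ] ℂ) = E.ε := by
  ext x; simp [cu]

theorem cv_sandwich (E : CoData C) (u u' w : C →ₗ[ℂ] ℂ) (h : cv E u' u = cu E) :
    cv E u' (cv E (cv E u w) u') = cv E w u' := by
  rw [← cv_assoc, ← cv_assoc, h, cv_one_left]

theorem cv_inv_uni (E : CoData C) (a b c : C →ₗ[ℂ] ℂ)
    (h1 : cv E a b = cu E) (h2 : cv E b c = cu E) : a = c := by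
  have h := cv_assoc E a b c
  rw [h1, h2, cv_one_left, cv_one_right] at h
  exact h.symm
end Helpers

section FinalParts
open Coalgebra
variable (A : Type*) [Ring A] [HopfAlgebra ℂ A]

local notation "𝔈₁" => coA A
local notation "𝔈₂" => CoData.tmul (coA A) (coA A)
local notation "𝔈₃" => CoData.tmul (coA A) (CoData.tmul (coA A) (coA A))
local notation "𝔈₃'" => CoData.tmul (CoData.tmul (coA A) (coA A)) (coA A)
local notation "𝔪" => LinearMap.mul' ℂ A
local notation "η" => Algebra.linearMap ℂ A

theorem pullInv {C : Type*} [AddCommGroup C] [Module ℂ C] {E : CoData C}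
    {φ : C →ₗ[ℂ] A ⊗[ℂ] A} (M : IsCoMor E 𝔈₂ φ) {a b : A ⊗[ℂ] A →ₗ[ℂ] ℂ}
    (h : cv 𝔈₂ a b = (CoData.tmul (coA A) (coA A)).ε) :
    cv E (a ∘ₗ φ) (b ∘ₗ φ) = cu E := by
  rw [cv_pullback E 𝔈₂ φ M.comp_Δ, h, cu_eps]
  exact M.comp_ε

theorem part2 (σ σinv : (A ⊗[ℂ] A) →ₗ[ℂ] ℂ)
    (hσn : IsNormalizedCocycle A counit σ)
    (hσi : IsConvInverse A comul counit σ σinv) :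
    IsNormalizedCocycle A counit σinv := by
  have key : ∀ (j : A →ₗ[ℂ] A ⊗[ℂ] A), IsCoMor 𝔈₁ 𝔈₂ j →
      σ ∘ₗ j = Coalgebra.counit → σinv ∘ₗ j = Coalgebra.counit := by
    intro j M hj
    have h := cv_pullback 𝔈₁ 𝔈₂ j M.comp_Δ σ σinv
    have h2 : cv 𝔈₂ σ σinv = (CoData.tmul (coA A) (coA A)).ε := hσi.1
    rw [h2, M.comp_ε, hj] at h
    have h3 : (Coalgebra.counit : A →ₗ[ℂ] ℂ) = cu 𝔈₁ := (cu_eps 𝔈₁).symm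
    rw [h3, cv_one_left] at h
    rw [h]; rfl
  have k1 : σ ∘ₗ ((TensorProduct.mk ℂ A A).flip 1) = Coalgebra.counit := by
    ext a; simpa using (hσn a).1
  have k2 : σ ∘ₗ (TensorProduct.mk ℂ A A 1) = Coalgebra.counit := by
    ext a; simpa using (hσn a).2
  have r1 := key _ (j₁Mor A) k1
  have r2 := key _ (j₂Mor A) k2
  intro a
  constructor
  · simpa using LinearMap.congr_fun r1 a
  · simpa using LinearMap.congr_fun r2 a

theorem part45 (σ σinv : (A ⊗[ℂ] A) →ₗ[ℂ] ℂ)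
    (hσi : IsConvInverse A comul counit σ σinv) :
    deformMul A comul (deformMul A comul (LinearMap.mul' ℂ A) σ σinv) σinv σ
        = LinearMap.mul' ℂ A ∧
    deformMul A comul (LinearMap.mul' ℂ A) (counit₂ A counit) (counit₂ A counit)
        = LinearMap.mul' ℂ A := by
  have hu : cv 𝔈₂ (η ∘ₗ σinv) (η ∘ₗ σ) = cu 𝔈₂ := by
    rw [cv_toA]
    have h2 : cv 𝔈₂ σinv σ = (CoData.tmul (coA A) (coA A)).ε := hσi.2
    rw [h2]; rfl
  constructor
  · show cv 𝔈₂ (cv 𝔈₂ (η ∘ₗ σinv)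
        (cv 𝔈₂ (cv 𝔈₂ (η ∘ₗ σ) 𝔪) (η ∘ₗ σinv))) (η ∘ₗ σ) = 𝔪
    rw [cv_assoc, cv_assoc, hu, cv_one_right, ← cv_assoc, hu, cv_one_left]
  · show cv 𝔈₂ (cv 𝔈₂ (cu 𝔈₂) 𝔪) (cu 𝔈₂) = 𝔪
    rw [cv_one_left, cv_one_right]

set_option maxHeartbeats 1000000 in
theorem part1 (σ σinv : (A ⊗[ℂ] A) →ₗ[ℂ] ℂ)
    (hσ : IsHopf2Cocycle A comul (LinearMap.mul' ℂ A) σ)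
    (hσi : IsConvInverse A comul counit σ σinv) :
    IsHopf2Cocycle A comul (deformMul A comul (LinearMap.mul' ℂ A) σ σinv) σinv := by
  set α := (TensorProduct.assoc ℂ A A A).symm.toLinearMap with hα
  have Mfε : IsCoMor 𝔈₃ 𝔈₂ (CoData.eL 𝔈₁) := IsCoMor.eL 𝔈₁ 𝔈₂
  have Mfm : IsCoMor 𝔈₃ 𝔈₂ (LinearMap.lTensor A 𝔪) :=
    IsCoMor.tmul IsCoMor.id (mulMor A)
  have Mhε : IsCoMor 𝔈₃' 𝔈₂ (CoData.eR 𝔈₁) := IsCoMor.eR 𝔈₂ 𝔈₁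
  have Mhm : IsCoMor 𝔈₃' 𝔈₂ (LinearMap.rTensor A 𝔪) :=
    IsCoMor.tmul (mulMor A) IsCoMor.id
  have Mα : IsCoMor 𝔈₃ 𝔈₃' α := IsCoMor.assocSymm 𝔈₁ 𝔈₁ 𝔈₁
  -- the eight elements
  set p := σ ∘ₗ CoData.eL 𝔈₁ with hp
  set p' := σinv ∘ₗ CoData.eL 𝔈₁ with hp'
  set q := σ ∘ₗ LinearMap.lTensor A 𝔪 with hq
  set q' := σinv ∘ₗ LinearMap.lTensor A 𝔪 with hq'
  set S := σ ∘ₗ (CoData.eR 𝔈₁ ∘ₗ α) with hS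
  set S' := σinv ∘ₗ (CoData.eR 𝔈₁ ∘ₗ α) with hS'
  set T := σ ∘ₗ (LinearMap.rTensor A 𝔪 ∘ₗ α) with hT
  set T' := σinv ∘ₗ (LinearMap.rTensor A 𝔪 ∘ₗ α) with hT'
  have h1 : cv 𝔈₂ σ σinv = (CoData.tmul (coA A) (coA A)).ε := hσi.1
  have h2 : cv 𝔈₂ σinv σ = (CoData.tmul (coA A) (coA A)).ε := hσi.2
  have hp'p : cv 𝔈₃ p' p = cu 𝔈₃ := pullInv A Mfε h2
  have hq'q : cv 𝔈₃ q' q = cu 𝔈₃ := pullInv A Mfm h2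
  have hSS' : cv 𝔈₃ S S' = cu 𝔈₃ := pullInv A (Mhε.comp Mα) h1
  have hTT' : cv 𝔈₃ T T' = cu 𝔈₃ := pullInv A (Mhm.comp Mα) h1
  -- pullback of 𝔈₃' convolutions along α
  have pullα : ∀ f g : (A ⊗[ℂ] A) ⊗[ℂ] A →ₗ[ℂ] ℂ,
      cv 𝔈₃' f g ∘ₗ α = cv 𝔈₃ (f ∘ₗ α) (g ∘ₗ α) :=
    fun f g => (cv_pullback 𝔈₃ 𝔈₃' α Mα.comp_Δ f g).symm
  -- identification of the cocycle sides for a general multiplication and τ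
  have hmσ : deformMul A comul (LinearMap.mul' ℂ A) σ σinv
      = cv 𝔈₂ (cv 𝔈₂ (η ∘ₗ σ) 𝔪) (η ∘ₗ σinv) := rfl
  -- LHS for (m, σ):
  have lhs_mσ0 : cocyLHS A comul (LinearMap.mul' ℂ A) σ = cv 𝔈₃ p q := L1 A 𝔪 σ
  -- RHS for (m, σ):
  have rhs_mσ0 : cocyRHS A comul (LinearMap.mul' ℂ A) σ = cv 𝔈₃ S T := by
    rw [L2 A 𝔪 σ, pullα, LinearMap.comp_assoc, LinearMap.comp_assoc]
  have hσ' : cv 𝔈₃ p q = cv 𝔈₃ S T := by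
    rw [← lhs_mσ0, ← rhs_mσ0]; exact hσ
  -- LHS for (mσ, σinv):
  have lhs_def : cocyLHS A comul (deformMul A comul (LinearMap.mul' ℂ A) σ σinv) σinv
      = cv 𝔈₃ q' p' := by
    rw [L1 A _ σinv, hmσ, absR A σinv σinv (cv 𝔈₂ (η ∘ₗ σ) 𝔪), absL A σ σinv 𝔪]
    rw [← hp', ← hq', ← hp]
    exact cv_sandwich 𝔈₃ p p' q' hp'p
  -- RHS for (mσ, σinv):
  have rhs_def : cocyRHS A comul (deformMul A comul (LinearMap.mul' ℂ A) σ σinv) σinv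
      = cv 𝔈₃ T' S' := by
    rw [L2 A _ σinv, hmσ, absR' A σinv σinv (cv 𝔈₂ (η ∘ₗ σ) 𝔪), absL' A σ σinv 𝔪]
    rw [pullα, pullα, pullα]
    simp only [LinearMap.comp_assoc]
    rw [← hS, ← hS', ← hT']
    exact cv_sandwich 𝔈₃ S S' T' (pullInv A (Mhε.comp Mα) h2)
  show cocyLHS A comul (deformMul A comul (LinearMap.mul' ℂ A) σ σinv) σinv
      = cocyRHS A comul (deformMul A comul (LinearMap.mul' ℂ A) σ σinv) σinv
  rw [lhs_def, rhs_def]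
  apply cv_inv_uni 𝔈₃ _ (cv 𝔈₃ p q) _
  · rw [cv_assoc, ← cv_assoc _ p' p q, hp'p, cv_one_left]
    exact hq'q
  · rw [hσ', cv_assoc, ← cv_assoc _ T T' S', hTT', cv_one_left]
    exact hSS'
end FinalParts


section

open Coalgebra

variable (A : Type*) [Ring A] [HopfAlgebra ℂ A]

/-- if `σ` is a normalized Hopf 2-cocycle on `A` with convolution inverse
`σinv`, then `σinv` is a normalized Hopf 2-cocycle on `A_σ` and `(A_σ)_{σ⁻¹} = A`.
Together with `A_ε = A` (the counit-cocycle is the identity deformation) and the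
composition rule `α_τ ∘ α_σ = α_{τ∗σ}`, this makes the arrows `α_σ : A → A_σ` into a
groupoid with identities `α_ε` and inverses `α_{σ⁻¹}`. -/
theorem inverse_cocycle_deformation
    (σ σinv : (A ⊗[ℂ] A) →ₗ[ℂ] ℂ)
    (hσ : IsHopf2Cocycle A comul (LinearMap.mul' ℂ A) σ)
    (hσn : IsNormalizedCocycle A counit σ)
    (hσi : IsConvInverse A comul counit σ σinv) :
    IsHopf2Cocycle A comul (deformMul A comul (LinearMap.mul' ℂ A) σ σinv) σinv ∧
    IsNormalizedCocycle A counit σinv ∧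
    IsConvInverse A comul counit σinv σ ∧
    deformMul A comul (deformMul A comul (LinearMap.mul' ℂ A) σ σinv) σinv σ
      = LinearMap.mul' ℂ A ∧
    deformMul A comul (LinearMap.mul' ℂ A) (counit₂ A counit) (counit₂ A counit)
      = LinearMap.mul' ℂ A := by
  exact ⟨part1 A σ σinv hσ hσi, part2 A σ σinv hσn hσi, ⟨hσi.2, hσi.1⟩,
    (part45 A σ σinv hσi).1, (part45 A σ σinv hσi).2⟩

end
end

section
/- Let H be a Hopf algebra with bijective antipode, R a braided Hopf algebra in the category of Yetter–Drinfeld modules over H, and A = R#H the bosonization. For σ a normalized Hopf 2-cocycle on H, the map σ̃: A ⊗ A → ℂ defined by σ̃(r#h, s#k) = σ(h,k) ε_R(r) ε_R(s) is a normalized Hopf 2-cocycle on A whose restriction to H ⊗ H equals σ. Moreover the assignment σ ↦ σ̃ is injective and is a section of the restriction map Z²(A,ℂ) → Z²(H,ℂ). -/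
open TensorProduct

section

open Coalgebra

section NatHelpers

variable {R : Type*} [CommSemiring R]
variable {M N P Q M' N' P' Q' : Type*}
  [AddCommMonoid M] [AddCommMonoid N] [AddCommMonoid P] [AddCommMonoid Q]
  [AddCommMonoid M'] [AddCommMonoid N'] [AddCommMonoid P'] [AddCommMonoid Q']
  [Module R M] [Module R N] [Module R P] [Module R Q]
  [Module R M'] [Module R N'] [Module R P'] [Module R Q']

lemma natTTT (f : M →ₗ[R] M') (g : N →ₗ[R] N') (h : P →ₗ[R] P') (k : Q →ₗ[R] Q') :
    (TensorProduct.tensorTensorTensorComm R M' N' P' Q').toLinearMap ∘ₗ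
        TensorProduct.map (TensorProduct.map f g) (TensorProduct.map h k) =
      TensorProduct.map (TensorProduct.map f h) (TensorProduct.map g k) ∘ₗ
        (TensorProduct.tensorTensorTensorComm R M N P Q).toLinearMap := by
  ext m n p q
  simp

lemma natLeftComm (f : M →ₗ[R] M') (g : N →ₗ[R] N') (h : P →ₗ[R] P') :
    (TensorProduct.leftComm R M' N' P').toLinearMap ∘ₗ
        TensorProduct.map f (TensorProduct.map g h) =
      TensorProduct.map g (TensorProduct.map f h) ∘ₗ
        (TensorProduct.leftComm R M N P).toLinearMap := by
  ext m n p
  simp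

lemma comp_assoc_rw {S T U V W : Type*} [AddCommMonoid S] [AddCommMonoid T] [AddCommMonoid U]
    [AddCommMonoid V] [AddCommMonoid W] [Module R S] [Module R T] [Module R U] [Module R V]
    [Module R W]
    {f : U →ₗ[R] V} {g : T →ₗ[R] U} {f' : T →ₗ[R] W} {g' : W →ₗ[R] V}
    (hfg : f ∘ₗ g = g' ∘ₗ f') (k : S →ₗ[R] T) :
    f ∘ₗ (g ∘ₗ k) = g' ∘ₗ (f' ∘ₗ k) := by
  rw [← LinearMap.comp_assoc, hfg, LinearMap.comp_assoc]

end NatHelpers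

section BialgAux

open Coalgebra

variable {H : Type*} [Ring H] [HopfAlgebra ℂ H]
variable {A : Type*} [Ring A] [HopfAlgebra ℂ A]
variable (π : A →ₐc[ℂ] H)

/-- The map `(a₁ ⊗ b₁) ⊗ (a₂ b₂)` built from comultiplication and multiplication. -/
noncomputable def Gmap (A : Type*) [Ring A] [HopfAlgebra ℂ A] :
    (A ⊗[ℂ] A) →ₗ[ℂ] (A ⊗[ℂ] A) ⊗[ℂ] A :=
  (LinearMap.lTensor (A ⊗[ℂ] A) (LinearMap.mul' ℂ A)) ∘ₗ comul₂ A comul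

lemma aux_mul :
    LinearMap.mul' ℂ H ∘ₗ TensorProduct.map π.toLinearMap π.toLinearMap =
      π.toLinearMap ∘ₗ LinearMap.mul' ℂ A := by
  ext a b
  show LinearMap.mul' ℂ H (π a ⊗ₜ[ℂ] π b) = π.toLinearMap (a * b)
  rw [LinearMap.mul'_apply]
  exact (map_mul π a b).symm

lemma aux_comul :
    comul₂ H comul ∘ₗ TensorProduct.map π.toLinearMap π.toLinearMap =
      TensorProduct.map (TensorProduct.map π.toLinearMap π.toLinearMap)
        (TensorProduct.map π.toLinearMap π.toLinearMap) ∘ₗ comul₂ A comul := by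
  have hc : comul ∘ₗ π.toLinearMap =
      TensorProduct.map π.toLinearMap π.toLinearMap ∘ₗ (comul : A →ₗ[ℂ] A ⊗[ℂ] A) :=
    (CoalgHomClass.map_comp_comul π).symm
  unfold comul₂
  rw [LinearMap.comp_assoc, ← TensorProduct.map_comp, hc,
    TensorProduct.map_comp, ← LinearMap.comp_assoc, natTTT, LinearMap.comp_assoc]

lemma aux_counit :
    counit₂ H counit ∘ₗ TensorProduct.map π.toLinearMap π.toLinearMap =
      counit₂ A counit := by
  have hc : (counit : H →ₗ[ℂ] ℂ) ∘ₗ π.toLinearMap = (counit : A →ₗ[ℂ] ℂ) :=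
    CoalgHomClass.counit_comp π
  unfold counit₂
  rw [LinearMap.comp_assoc, ← TensorProduct.map_comp, hc]

lemma aux_convC (σ τ : (H ⊗[ℂ] H) →ₗ[ℂ] ℂ) :
    convC A comul (σ ∘ₗ TensorProduct.map π.toLinearMap π.toLinearMap)
        (τ ∘ₗ TensorProduct.map π.toLinearMap π.toLinearMap) =
      convC H comul σ τ ∘ₗ TensorProduct.map π.toLinearMap π.toLinearMap := by
  unfold convC
  rw [TensorProduct.map_comp, LinearMap.comp_assoc, LinearMap.comp_assoc,
    ← aux_comul π, LinearMap.comp_assoc]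

lemma aux_G :
    Gmap H ∘ₗ TensorProduct.map π.toLinearMap π.toLinearMap =
      TensorProduct.map (TensorProduct.map π.toLinearMap π.toLinearMap) π.toLinearMap ∘ₗ
        Gmap A := by
  unfold Gmap
  rw [LinearMap.comp_assoc, aux_comul π, ← LinearMap.comp_assoc, ← LinearMap.comp_assoc]
  congr 1
  rw [LinearMap.lTensor_comp_map, LinearMap.map_comp_lTensor, aux_mul π]

lemma aux_cocyLHS (σ : (H ⊗[ℂ] H) →ₗ[ℂ] ℂ) :
    cocyLHS A comul (LinearMap.mul' ℂ A)
        (σ ∘ₗ TensorProduct.map π.toLinearMap π.toLinearMap) =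
      cocyLHS H comul (LinearMap.mul' ℂ H) σ ∘ₗ
        TensorProduct.map π.toLinearMap
          (TensorProduct.map π.toLinearMap π.toLinearMap) := by
  have hG : (LinearMap.lTensor (A ⊗[ℂ] A) (LinearMap.mul' ℂ A)) ∘ₗ comul₂ A comul = Gmap A := rfl
  have hGH : (LinearMap.lTensor (H ⊗[ℂ] H) (LinearMap.mul' ℂ H)) ∘ₗ comul₂ H comul = Gmap H := rfl
  have hstep : TensorProduct.map π.toLinearMap
        (TensorProduct.map (TensorProduct.map π.toLinearMap π.toLinearMap) π.toLinearMap) ∘ₗ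
          LinearMap.lTensor A (Gmap A) =
      LinearMap.lTensor H (Gmap H) ∘ₗ
        TensorProduct.map π.toLinearMap
          (TensorProduct.map π.toLinearMap π.toLinearMap) := by
    rw [LinearMap.map_comp_lTensor, LinearMap.lTensor_comp_map, ← aux_G π]
  have hLC := (natLeftComm (R := ℂ) π.toLinearMap
      (TensorProduct.map π.toLinearMap π.toLinearMap) π.toLinearMap).symm
  have t1 := comp_assoc_rw (R := ℂ) hLC (LinearMap.lTensor A (Gmap A))
  unfold cocyLHS
  rw [hG, hGH, TensorProduct.map_comp]
  simp only [LinearMap.comp_assoc]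
  rw [t1, ← LinearMap.comp_assoc, hstep, LinearMap.comp_assoc]

lemma aux_cocyRHS (σ : (H ⊗[ℂ] H) →ₗ[ℂ] ℂ) :
    cocyRHS A comul (LinearMap.mul' ℂ A)
        (σ ∘ₗ TensorProduct.map π.toLinearMap π.toLinearMap) =
      cocyRHS H comul (LinearMap.mul' ℂ H) σ ∘ₗ
        TensorProduct.map π.toLinearMap
          (TensorProduct.map π.toLinearMap π.toLinearMap) := by
  have hG : (LinearMap.lTensor (A ⊗[ℂ] A) (LinearMap.mul' ℂ A)) ∘ₗ comul₂ A comul = Gmap A := rfl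
  have hGH : (LinearMap.lTensor (H ⊗[ℂ] H) (LinearMap.mul' ℂ H)) ∘ₗ comul₂ H comul = Gmap H := rfl
  have h1 : TensorProduct.map (TensorProduct.map π.toLinearMap π.toLinearMap)
        (TensorProduct.map π.toLinearMap π.toLinearMap) ∘ₗ
          (TensorProduct.assoc ℂ (A ⊗[ℂ] A) A A).toLinearMap =
      (TensorProduct.assoc ℂ (H ⊗[ℂ] H) H H).toLinearMap ∘ₗ
        TensorProduct.map
          (TensorProduct.map (TensorProduct.map π.toLinearMap π.toLinearMap) π.toLinearMap)
          π.toLinearMap := by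
    exact TensorProduct.map_map_comp_assoc_eq
      (TensorProduct.map π.toLinearMap π.toLinearMap) π.toLinearMap π.toLinearMap
  have h2 : TensorProduct.map
        (TensorProduct.map (TensorProduct.map π.toLinearMap π.toLinearMap) π.toLinearMap)
        π.toLinearMap ∘ₗ LinearMap.rTensor A (Gmap A) =
      LinearMap.rTensor H (Gmap H) ∘ₗ
        TensorProduct.map (TensorProduct.map π.toLinearMap π.toLinearMap) π.toLinearMap := by
    rw [LinearMap.map_comp_rTensor, LinearMap.rTensor_comp_map, ← aux_G π]
  have h3 : TensorProduct.map (TensorProduct.map π.toLinearMap π.toLinearMap) π.toLinearMap ∘ₗ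
        (TensorProduct.assoc ℂ A A A).symm.toLinearMap =
      (TensorProduct.assoc ℂ H H H).symm.toLinearMap ∘ₗ
        TensorProduct.map π.toLinearMap (TensorProduct.map π.toLinearMap π.toLinearMap) :=
    TensorProduct.map_map_comp_assoc_symm_eq _ _ _
  have t1 := comp_assoc_rw (R := ℂ) h1
    (LinearMap.rTensor A (Gmap A) ∘ₗ (TensorProduct.assoc ℂ A A A).symm.toLinearMap)
  have t2 := comp_assoc_rw (R := ℂ) h2 (TensorProduct.assoc ℂ A A A).symm.toLinearMap
  unfold cocyRHS
  rw [hG, hGH, TensorProduct.map_comp]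
  simp only [LinearMap.comp_assoc]
  rw [t1, t2, h3]

end BialgAux

/-- let `A = R#H` be a bosonization, so that there are bialgebra maps
`π : A → H` and `ι : H → A` with `π ∘ ι = id` (for `A = R#H` one has `π(r#h) = ε_R(r)h`
and `ι(h) = 1#h`).  For a normalized Hopf 2-cocycle `σ` on `H`, the pullback
`σ̃ = σ ∘ (π ⊗ π)` — which on `A = R#H` is exactly
`σ̃(r#h, s#k) = σ(h,k) ε_R(r) ε_R(s)` — is a normalized Hopf 2-cocycle on `A` whose
restriction along `ι ⊗ ι` to `H ⊗ H` is `σ`; moreover `σ ↦ σ̃` is injective, being a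
section of the restriction map `Z²(A,ℂ) → Z²(H,ℂ)`. -/
theorem bosonization_cocycle_section
    (H : Type*) [Ring H] [HopfAlgebra ℂ H]
    (A : Type*) [Ring A] [HopfAlgebra ℂ A]
    (π : A →ₐc[ℂ] H) (ι : H →ₐc[ℂ] A)
    (hsec : π.comp ι = BialgHom.id ℂ H)
    (σ σinv : (H ⊗[ℂ] H) →ₗ[ℂ] ℂ)
    (hσ : IsHopf2Cocycle H comul (LinearMap.mul' ℂ H) σ)
    (hσn : IsNormalizedCocycle H counit σ)
    (hσi : IsConvInverse H comul counit σ σinv) :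
    IsHopf2Cocycle A comul (LinearMap.mul' ℂ A)
        (σ ∘ₗ TensorProduct.map π.toLinearMap π.toLinearMap) ∧
    IsNormalizedCocycle A counit (σ ∘ₗ TensorProduct.map π.toLinearMap π.toLinearMap) ∧
    IsConvInverse A comul counit (σ ∘ₗ TensorProduct.map π.toLinearMap π.toLinearMap)
        (σinv ∘ₗ TensorProduct.map π.toLinearMap π.toLinearMap) ∧
    (σ ∘ₗ TensorProduct.map π.toLinearMap π.toLinearMap) ∘ₗ
        TensorProduct.map ι.toLinearMap ι.toLinearMap = σ ∧
    Function.Injective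
      (fun τ : (H ⊗[ℂ] H) →ₗ[ℂ] ℂ => τ ∘ₗ TensorProduct.map π.toLinearMap π.toLinearMap) := by
  set P := TensorProduct.map π.toLinearMap π.toLinearMap with hP
  have hsecl : π.toLinearMap ∘ₗ ι.toLinearMap = LinearMap.id := by
    ext x
    have := DFunLike.congr_fun hsec x
    exact (by simpa using this : π (ι x) = x)
  have key : ∀ τ : (H ⊗[ℂ] H) →ₗ[ℂ] ℂ,
      (τ ∘ₗ P) ∘ₗ TensorProduct.map ι.toLinearMap ι.toLinearMap = τ := by
    intro τ
    rw [hP, LinearMap.comp_assoc, ← TensorProduct.map_comp, hsecl, TensorProduct.map_id,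
      LinearMap.comp_id]
  refine ⟨?_, ?_, ?_, key σ, ?_⟩
  · unfold IsHopf2Cocycle
    rw [aux_cocyLHS π σ, aux_cocyRHS π σ, hσ]
  · intro a
    have h1 : π (1 : A) = 1 := map_one π
    have hPa : P (a ⊗ₜ[ℂ] (1 : A)) = (π a) ⊗ₜ[ℂ] (1 : H) := by
      simp only [hP, TensorProduct.map_tmul]
      show (π a) ⊗ₜ[ℂ] (π (1 : A)) = _
      rw [h1]
    have hPa' : P ((1 : A) ⊗ₜ[ℂ] a) = (1 : H) ⊗ₜ[ℂ] (π a) := by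
      simp only [hP, TensorProduct.map_tmul]
      show (π (1 : A)) ⊗ₜ[ℂ] (π a) = _
      rw [h1]
    constructor
    · rw [LinearMap.comp_apply, hPa, (hσn (π a)).1, CoalgHomClass.counit_comp_apply]
    · rw [LinearMap.comp_apply, hPa', (hσn (π a)).2, CoalgHomClass.counit_comp_apply]
  · constructor
    · rw [hP, aux_convC π σ σinv, hσi.1, aux_counit π]
    · rw [hP, aux_convC π σinv σ, hσi.2, aux_counit π]
  · intro τ₁ τ₂ h
    simp only at h
    rw [← key τ₁, ← key τ₂, h]


end
end

section
/- Let X be a subrack of a group Γ (with x ▷ y = xyx^{-1}) and φ ∈ Z²(Γ, ℂ^×) a group 2-cocycle. Then the restriction of φ to X × X satisfies the condition φ(x,z)φ(x▷y, x▷z)φ(x▷(y▷z), x)φ(y▷z, y) = φ(y,z)φ(x, y▷z)φ(x▷(y▷z), x▷y)φ(x▷z, x) for all x,y,z ∈ X. Consequently, for any rack 2-cocycle q on X, the twist q^φ_{x,y} = φ(x,y)φ(x▷y, x)^{-1} q_{x,y} is again a rack 2-cocycle. -/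
/-- A rack 2-cocycle on a subset `X` of a group with conjugation `x ▷ y = x y x⁻¹`. -/
def IsRackCocycleOn {Γ : Type*} [Group Γ] (X : Set Γ) (q : Γ → Γ → ℂˣ) : Prop :=
  ∀ i ∈ X, ∀ j ∈ X, ∀ k ∈ X,
    q i (j * k * j⁻¹) * q j k = q (i * j * i⁻¹) (i * k * i⁻¹) * q i k

/-- Key multiplicativity identity for a group 2-cocycle, at the level of `ℂ`. -/
theorem groupCocycle_key {Γ : Type*} [Group Γ] (φ : Γ → Γ → ℂˣ)
    (hφ : ∀ g h t : Γ, φ g h * φ (g * h) t = φ h t * φ g (h * t)) :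
    ∀ g h k : Γ, (φ (g*h) k : ℂ) * φ (g*(h*k*h⁻¹)*g⁻¹) g * φ (h*k*h⁻¹) h
      = φ g (h*k*h⁻¹) * φ h k * φ (g*(h*k*h⁻¹)*g⁻¹) (g*h) := by
  intro g h k
  have e1 := congrArg (Units.val) (hφ g h k)
  have e2 := congrArg (Units.val) (hφ g (h*k*h⁻¹) h)
  have e3 := congrArg (Units.val) (hφ (g*(h*k*h⁻¹)*g⁻¹) g h)
  rw [show h*k*h⁻¹*h = h*k by group] at e2
  rw [show (g*(h*k*h⁻¹)*g⁻¹)*g = g*(h*k*h⁻¹) by group] at e3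
  simp only [Units.val_mul] at e1 e2 e3
  have hd : ((φ g h : ℂ) * φ (g*(h*k*h⁻¹)) h * φ g (h*k)) ≠ 0 :=
    mul_ne_zero (mul_ne_zero (Units.ne_zero _) (Units.ne_zero _)) (Units.ne_zero _)
  apply mul_right_cancel₀ hd
  linear_combination
    ((φ g (h*k*h⁻¹) : ℂ) * φ (g*(h*k*h⁻¹)) h * φ (g*(h*k*h⁻¹)*g⁻¹) g * φ (g*(h*k*h⁻¹)) h) * e1
    - ((φ g h : ℂ) * φ (g*h) k * φ (g*(h*k*h⁻¹)*g⁻¹) g * φ (g*(h*k*h⁻¹)) h) * e2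
    + ((φ g (h*k*h⁻¹) : ℂ) * φ (g*(h*k*h⁻¹)) h * φ h k * φ g (h*k)) * e3

/-- The rack-twisting identity for a group 2-cocycle (in `ℂˣ`). -/
theorem groupCocycle_rackIdentity {Γ : Type*} [Group Γ] (φ : Γ → Γ → ℂˣ)
    (hφ : ∀ g h t : Γ, φ g h * φ (g * h) t = φ h t * φ g (h * t)) :
    ∀ x y z : Γ,
      φ x z * φ (x * y * x⁻¹) (x * z * x⁻¹)
          * φ (x * (y * z * y⁻¹) * x⁻¹) x * φ (y * z * y⁻¹) y
        = φ y z * φ x (y * z * y⁻¹)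
            * φ (x * (y * z * y⁻¹) * x⁻¹) (x * y * x⁻¹) * φ (x * z * x⁻¹) x := by
  intro x y z
  refine Units.ext ?_
  simp only [Units.val_mul]
  have k1 := groupCocycle_key φ hφ x y z
  have k2 := groupCocycle_key φ hφ (x*y*x⁻¹) x z
  rw [show (x*y*x⁻¹)*x = x*y by group,
      show (x*y*x⁻¹)*(x*z*x⁻¹)*(x*y*x⁻¹)⁻¹ = x*(y*z*y⁻¹)*x⁻¹ by group] at k2
  have hd : ((φ (x*y) z : ℂ) * φ (x*(y*z*y⁻¹)*x⁻¹) (x*y)) ≠ 0 :=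
    mul_ne_zero (Units.ne_zero _) (Units.ne_zero _)
  apply mul_right_cancel₀ hd
  linear_combination
    ((φ (x*y*x⁻¹) (x*z*x⁻¹) : ℂ) * φ x z * φ (x*(y*z*y⁻¹)*x⁻¹) (x*y)) * k1
    - ((φ x (y*z*y⁻¹) : ℂ) * φ y z * φ (x*(y*z*y⁻¹)*x⁻¹) (x*y)) * k2

/-- Abstract combination step in `ℂˣ`. -/
theorem rackTwist_combine (a b c d e f g h u v w z : ℂˣ)
    (h1 : d*c*e*f = b*a*g*h) (h2 : u*v = w*z) :
    a*e⁻¹*u*(b*f⁻¹*v) = c*g⁻¹*w*(d*h⁻¹*z) := by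
  have h1' := congrArg (Units.val) h1
  have h2' := congrArg (Units.val) h2
  simp only [Units.val_mul] at h1' h2'
  refine Units.ext ?_
  simp only [Units.val_mul, Units.val_inv_eq_inv_val]
  field_simp
  linear_combination (-((u:ℂ)*v)) * h1' + ((c:ℂ)*d*e*f) * h2'

/-- if `X` is a subrack of a group `Γ` (under conjugation) and `φ` is a
normalized group 2-cocycle on `Γ`, then `φ` satisfies the rack-twisting identity on `X`;
consequently, for any rack 2-cocycle `q` on `X`, the twist
`q^φ_{x,y} = φ(x,y) φ(x▷y,x)⁻¹ q_{x,y}` is again a rack 2-cocycle on `X`. -/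
theorem groupCocycle_rackTwist {Γ : Type*} [Group Γ] (X : Set Γ)
    (hX : ∀ x ∈ X, ∀ y ∈ X, x * y * x⁻¹ ∈ X)
    (φ : Γ → Γ → ℂˣ)
    (hφ : ∀ g h t : Γ, φ g h * φ (g * h) t = φ h t * φ g (h * t))
    (hφ1 : ∀ g : Γ, φ g 1 = 1 ∧ φ 1 g = 1) :
    (∀ x ∈ X, ∀ y ∈ X, ∀ z ∈ X,
      φ x z * φ (x * y * x⁻¹) (x * z * x⁻¹)
          * φ (x * (y * z * y⁻¹) * x⁻¹) x * φ (y * z * y⁻¹) y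
        = φ y z * φ x (y * z * y⁻¹)
            * φ (x * (y * z * y⁻¹) * x⁻¹) (x * y * x⁻¹) * φ (x * z * x⁻¹) x) ∧
    (∀ q : Γ → Γ → ℂˣ, IsRackCocycleOn X q →
      IsRackCocycleOn X (fun x y => φ x y * (φ (x * y * x⁻¹) x)⁻¹ * q x y)) := by
  refine ⟨fun x _ y _ z _ => groupCocycle_rackIdentity φ hφ x y z, ?_⟩
  intro q hq i hi j hj k hk
  dsimp only
  rw [show (i*j*i⁻¹)*(i*k*i⁻¹)*(i*j*i⁻¹)⁻¹ = i*(j*k*j⁻¹)*i⁻¹ by group]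
  exact rackTwist_combine _ _ _ _ _ _ _ _ _ _ _ _
    (groupCocycle_rackIdentity φ hφ i j k) (hq i hi j hj k hk)
end
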